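/- arXiv:2105.04518 — 3 statements merged into one kernel-verified Lean document; each statement's English description precedes it below -/
import Mathlib

section
/- Under the four-level exposure model with noisy network observation and i.i.d. Bernoulli(p) treatment with 0 < p < 1, the Aronow–Samii estimator computed from the noisy network satisfies the exact bias identity E[ ȳ̃_{A&S}(c_{00}) ] − (1/N) Σ_{i=1}^N y_i(c_{00}) = (1/N) Σ_{i=1}^N [ 1 − (1 − βp)^{d_i} ] ( y_i(c_{01}) − y_i(c_{00}) ). -/
open MeasureTheory ProbabilityTheory Filter

namespace ASaux

variable {N : ℕ}

abbrev Idx (N : ℕ) := Fin N ⊕ {e : Fin N × Fin N // e.1 < e.2}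

def pr (i j : Fin N) : Idx N :=
  if h : i < j then Sum.inr ⟨(i, j), h⟩
  else if h' : j < i then Sum.inr ⟨(j, i), h'⟩
  else Sum.inl i

def B (i j : Fin N) : Finset (Idx N) := {Sum.inl j, pr i j}

lemma mem_inl_B (i j : Fin N) : Sum.inl j ∈ B i j := Finset.mem_insert_self _ _

lemma mem_pr_B (i j : Fin N) : pr i j ∈ B i j :=
  Finset.mem_insert_of_mem (Finset.mem_singleton_self _)

lemma pr_self (i : Fin N) : pr i i = Sum.inl i := by
  simp [pr]

lemma pr_inr {i j : Fin N} (h : j ≠ i) :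
    ∃ e : {e : Fin N × Fin N // e.1 < e.2}, pr i j = Sum.inr e ∧
      ((e.1.1 = i ∧ e.1.2 = j) ∨ (e.1.1 = j ∧ e.1.2 = i)) := by
  rcases lt_trichotomy i j with hij | hij | hij
  · exact ⟨⟨(i, j), hij⟩, by simp [pr, hij], Or.inl ⟨rfl, rfl⟩⟩
  · exact absurd hij.symm h
  · exact ⟨⟨(j, i), hij⟩, by simp [pr, hij, not_lt_of_gt hij], Or.inr ⟨rfl, rfl⟩⟩

lemma B_disjoint (i : Fin N) {j k : Fin N} (hjk : j ≠ k) : Disjoint (B i j) (B i k) := by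
  simp only [Finset.disjoint_left, B, Finset.mem_insert, Finset.mem_singleton]
  rintro x (rfl | rfl) hx
  · rcases hx with h | h
    · exact hjk (Sum.inl.inj h)
    · by_cases hki : k = i
      · subst hki
        rw [pr_self] at h
        exact hjk (Sum.inl.inj h)
      · obtain ⟨e, he, -⟩ := pr_inr hki
        rw [he] at h
        exact Sum.inl_ne_inr h
  · by_cases hji : j = i
    · subst hji
      rw [pr_self] at hx
      rcases hx with h | h
      · exact hjk (Sum.inl.inj h)
      · by_cases hki : k = j
        · subst hki; exact hjk rfl
        · obtain ⟨e, he, -⟩ := pr_inr hki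
          rw [he] at h
          exact Sum.inl_ne_inr h
    · obtain ⟨e, he, hspec⟩ := pr_inr hji
      rw [he] at hx
      rcases hx with h | h
      · exact Sum.inr_ne_inl h
      · by_cases hki : k = i
        · subst hki; rw [pr_self] at h; exact Sum.inr_ne_inl h
        · obtain ⟨e', he', hspec'⟩ := pr_inr hki
          rw [he'] at h
          obtain rfl : e = e' := Sum.inr.inj h
          have hlt := e.2
          rcases hspec with ⟨h1, h2⟩ | ⟨h1, h2⟩ <;> rcases hspec' with ⟨h1', h2'⟩ | ⟨h1', h2'⟩
          · exact hjk (h2.symm.trans h2')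
          · exact hki (h1'.symm.trans h1)
          · exact hji (h1.symm.trans h1')
          · exact hjk (h1.symm.trans h1')


lemma prod_integral {Ω : Type} [MeasurableSpace Ω] (μ : Measure Ω) [IsProbabilityMeasure μ]
    (X : Idx N → Ω → ℕ) (hX : ∀ k, Measurable (X k))
    (hindep : iIndepFun X μ)
    (i : Fin N) (wf : Fin N → ℕ → ℕ → ℝ) (s : Finset (Fin N)) :
    ∫ ω, ∏ j ∈ s, wf j (X (Sum.inl j) ω) (X (pr i j) ω) ∂μ
      = ∏ j ∈ s, ∫ ω, wf j (X (Sum.inl j) ω) (X (pr i j) ω) ∂μ := by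
  classical
  set W : Fin N → Ω → ℝ := fun j ω => wf j (X (Sum.inl j) ω) (X (pr i j) ω) with hWdef
  have hWmeas : ∀ j, Measurable (W j) := fun j =>
    (measurable_of_countable (Function.uncurry (wf j))).comp
      ((hX _).prodMk (hX _))
  induction s using Finset.induction_on with
  | empty => simp
  | @insert j s hj ih =>
    have hdisj : Disjoint (B i j) (s.biUnion (B i)) := by
      rw [Finset.disjoint_biUnion_right]
      exact fun k hk => B_disjoint i (by rintro rfl; exact hj hk)
    have base := hindep.indepFun_finset (B i j) (s.biUnion (B i)) hdisj hX
    have hφm : Measurable (fun v : ((k : (B i j : Finset (Idx N))) → ℕ) =>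
        wf j (v ⟨Sum.inl j, mem_inl_B i j⟩) (v ⟨pr i j, mem_pr_B i j⟩)) := by
      show Measurable (Function.uncurry (wf j) ∘ (fun v : ((k : (B i j : Finset (Idx N))) → ℕ) =>
        (v ⟨Sum.inl j, mem_inl_B i j⟩, v ⟨pr i j, mem_pr_B i j⟩)))
      exact (measurable_of_countable _).comp
        ((measurable_pi_apply _).prodMk (measurable_pi_apply _))
    have hψm : Measurable (fun v : ((k : ((s.biUnion (B i)) : Finset (Idx N))) → ℕ) =>
        ∏ k ∈ s.attach, wf k.1
          (v ⟨Sum.inl k.1, Finset.mem_biUnion.mpr ⟨k.1, k.2, mem_inl_B i k.1⟩⟩)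
          (v ⟨pr i k.1, Finset.mem_biUnion.mpr ⟨k.1, k.2, mem_pr_B i k.1⟩⟩)) := by
      apply Finset.measurable_prod
      intro k _
      show Measurable (Function.uncurry (wf k.1) ∘
        (fun v : ((k : ((s.biUnion (B i)) : Finset (Idx N))) → ℕ) =>
          (v ⟨Sum.inl k.1, Finset.mem_biUnion.mpr ⟨k.1, k.2, mem_inl_B i k.1⟩⟩,
           v ⟨pr i k.1, Finset.mem_biUnion.mpr ⟨k.1, k.2, mem_pr_B i k.1⟩⟩)))
      exact (measurable_of_countable _).comp
        ((measurable_pi_apply _).prodMk (measurable_pi_apply _))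
    have hQ := base.comp hφm hψm
    have h1 : ((fun v : ((k : (B i j : Finset (Idx N))) → ℕ) =>
        wf j (v ⟨Sum.inl j, mem_inl_B i j⟩) (v ⟨pr i j, mem_pr_B i j⟩))
          ∘ fun ω (k : (B i j : Finset (Idx N))) => X k ω) = W j := rfl
    have h2 : ((fun v : ((k : ((s.biUnion (B i)) : Finset (Idx N))) → ℕ) =>
        ∏ k ∈ s.attach, wf k.1
          (v ⟨Sum.inl k.1, Finset.mem_biUnion.mpr ⟨k.1, k.2, mem_inl_B i k.1⟩⟩)
          (v ⟨pr i k.1, Finset.mem_biUnion.mpr ⟨k.1, k.2, mem_pr_B i k.1⟩⟩))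
          ∘ fun ω (k : ((s.biUnion (B i)) : Finset (Idx N))) => X k ω)
        = fun ω => ∏ k ∈ s, W k ω := by
      funext ω
      simp only [Function.comp_apply]
      exact Finset.prod_attach s fun k => W k ω
    rw [h1, h2] at hQ
    have hmprod : Measurable fun ω => ∏ k ∈ s, W k ω :=
      Finset.measurable_prod _ fun k _ => hWmeas k
    have hint := hQ.integral_fun_mul_eq_mul_integral ((hWmeas j).aestronglyMeasurable)
      hmprod.aestronglyMeasurable
    rw [Finset.prod_insert hj]
    simp only [Finset.prod_insert hj]
    calc ∫ ω, W j ω * ∏ k ∈ s, W k ω ∂μ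
        = (∫ ω, W j ω ∂μ) * ∫ ω, ∏ k ∈ s, W k ω ∂μ := hint
      _ = (∫ ω, W j ω ∂μ) * ∏ k ∈ s, ∫ ω, W k ω ∂μ := by rw [ih]

lemma integral_nat01 {Ω : Type} [MeasurableSpace Ω] (μ : Measure Ω) [IsProbabilityMeasure μ]
    (f : Ω → ℕ) (hf : Measurable f) (h01 : ∀ ω, f ω = 0 ∨ f ω = 1) :
    ∫ ω, (f ω : ℝ) ∂μ = (μ {ω | f ω = 1}).toReal := by
  have h : (fun ω => (f ω : ℝ)) = Set.indicator {ω | f ω = 1} (fun _ => (1:ℝ)) := by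
    funext ω
    rcases h01 ω with h | h <;> simp [h, Set.indicator_apply]
  rw [h]
  have hs : MeasurableSet {ω | f ω = 1} := hf (measurableSet_singleton 1)
  exact integral_indicator_one hs

lemma integrable_of_bound {Ω : Type} [MeasurableSpace Ω] (μ : Measure Ω) [IsFiniteMeasure μ]
    (f : Ω → ℝ) (hf : Measurable f) (C : ℝ) (hC : ∀ ω, |f ω| ≤ C) : Integrable f μ :=
  (integrable_const C).mono' hf.aestronglyMeasurable (ae_of_all _ fun ω => by
    simpa [Real.norm_eq_abs] using hC ω)


end ASaux

def Xfun {Ω : Type} {N : ℕ} (Z : Fin N → Ω → ℕ) (Atil : Fin N → Fin N → Ω → ℕ) :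
    ASaux.Idx N → Ω → ℕ :=
  Sum.elim Z (fun e : {e : Fin N × Fin N // e.1 < e.2} => Atil e.1.1 e.1.2)

noncomputable def Wfun {N : ℕ} (p : ℝ) (i j : Fin N) (z a : ℕ) : ℝ :=
  if j = i then 1 - (z:ℝ) else ((1-p)^a)⁻¹ * (1 - (z:ℝ)*(a:ℝ))

noncomputable def Wfun' {N : ℕ} (p : ℝ) (A : Fin N → Fin N → ℕ) (i j : Fin N) (z a : ℕ) : ℝ :=
  Wfun p i j z a * (if j = i then 1 else 1 - (z:ℝ)*((A i j):ℝ))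


/-- Exact bias identity for the Aronow–Samii estimator of `ȳ(c_00)`
computed from the noisy network, under the four-level exposure model and i.i.d.
Bernoulli(p) treatment with 0 < p < 1. Outcomes are indexed by
0 ↦ c_11, 1 ↦ c_10, 2 ↦ c_01, 3 ↦ c_00. -/
theorem aronow_samii_bias_c00
    {Ω : Type} [MeasurableSpace Ω] (μ : Measure Ω) [IsProbabilityMeasure μ]
    (N : ℕ)
    (A : Fin N → Fin N → ℕ)
    (hAsymm : ∀ i j, A i j = A j i)
    (hAdiag : ∀ i, A i i = 0)
    (hA01 : ∀ i j, A i j = 0 ∨ A i j = 1)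
    (α β p : ℝ) (hα0 : 0 ≤ α) (hα1 : α ≤ 1) (hβ0 : 0 ≤ β) (hβ1 : β ≤ 1)
    (hp0 : 0 < p) (hp1 : p < 1)
    (Z : Fin N → Ω → ℕ)
    (hZmeas : ∀ i, Measurable (Z i))
    (hZ01 : ∀ i ω, Z i ω = 0 ∨ Z i ω = 1)
    (hZp : ∀ i, μ {ω | Z i ω = 1} = ENNReal.ofReal p)
    (Atil : Fin N → Fin N → Ω → ℕ)
    (hmeas : ∀ i j, Measurable (Atil i j))
    (hsymm : ∀ i j ω, Atil i j ω = Atil j i ω)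
    (hdiag : ∀ i ω, Atil i i ω = 0)
    (h01 : ∀ i j ω, Atil i j ω = 0 ∨ Atil i j ω = 1)
    (hfalse : ∀ i j : Fin N, i < j → A i j = 0 →
      μ {ω | Atil i j ω = 1} = ENNReal.ofReal α)
    (htrue : ∀ i j : Fin N, i < j → A i j = 1 →
      μ {ω | Atil i j ω = 1} = ENNReal.ofReal (1 - β))
    (hindep : iIndepFun
      (Sum.elim Z (fun e : {e : Fin N × Fin N // e.1 < e.2} => Atil e.1.1 e.1.2)) μ)
    -- fixed potential outcomes, indexed 0 ↦ c_11, 1 ↦ c_10, 2 ↦ c_01, 3 ↦ c_00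
    (y : Fin N → Fin 4 → ℝ) :
    (∫ ω, (N : ℝ)⁻¹ * ∑ i,
        -- ỹ_{A&S,i}(c_00): indicator of positive observed exposure probability,
        -- times indicator of observed exposure c_00, divided by p̃_i(c_00),
        -- times the outcome at the true exposure
        ((if 0 < (1 - p) ^ ((∑ j, Atil i j ω) + 1) then (1:ℝ) else 0)
          * (if Z i ω = 0 ∧ (∑ j, Z j ω * Atil i j ω) = 0 then (1:ℝ) else 0)
          * ((1 - p) ^ ((∑ j, Atil i j ω) + 1))⁻¹
          * (if Z i ω = 1 then
              (if 0 < ∑ j, Z j ω * A i j then y i 0 else y i 1)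
             else
              (if 0 < ∑ j, Z j ω * A i j then y i 2 else y i 3))) ∂μ)
      - (N : ℝ)⁻¹ * ∑ i, y i 3
      = (N : ℝ)⁻¹ * ∑ i, (1 - (1 - β * p) ^ (∑ j, A i j)) * (y i 2 - y i 3) := by
  classical
  have hp' : (0:ℝ) < 1 - p := by linarith
  have hpne : (1 - p : ℝ) ≠ 0 := ne_of_gt hp'
  have hXmeas : ∀ k, Measurable (Xfun Z Atil k) := by
    rintro (j | e)
    · exact hZmeas j
    · exact hmeas e.1.1 e.1.2
  have hindepX : iIndepFun (Xfun Z Atil) μ := hindep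
  have hXinl : ∀ (j : Fin N) ω, Xfun Z Atil (Sum.inl j) ω = Z j ω := fun j ω => rfl
  have hXpr : ∀ i j : Fin N, j ≠ i → ∀ ω, Xfun Z Atil (ASaux.pr i j) ω = Atil i j ω := by
    intro i j hji ω
    obtain ⟨e, he, hspec⟩ := ASaux.pr_inr hji
    rw [he]
    rcases hspec with ⟨h1, h2⟩ | ⟨h1, h2⟩
    · show Atil e.1.1 e.1.2 ω = _
      rw [h1, h2]
    · show Atil e.1.1 e.1.2 ω = _
      rw [h1, h2]
      exact hsymm j i ω
  have hprne : ∀ i j : Fin N, j ≠ i → ASaux.pr i j ≠ Sum.inl j := by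
    intro i j hji
    obtain ⟨e, he, -⟩ := ASaux.pr_inr hji
    rw [he]
    exact fun h => Sum.inr_ne_inl h
  have castm : Measurable (fun n : ℕ => (n:ℝ)) := measurable_of_countable _
  -- concrete forms
  have hWi : ∀ (i : Fin N) ω,
      Wfun p i i (Xfun Z Atil (Sum.inl i) ω) (Xfun Z Atil (ASaux.pr i i) ω) = 1 - (Z i ω:ℝ) := by
    intro i ω; simp [Wfun, Xfun]
  have hWc : ∀ i j : Fin N, j ≠ i → ∀ ω,
      Wfun p i j (Xfun Z Atil (Sum.inl j) ω) (Xfun Z Atil (ASaux.pr i j) ω)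
        = ((1-p)^(Atil i j ω))⁻¹ * (1 - (Z j ω:ℝ)*(Atil i j ω:ℝ)) := by
    intro i j hji ω
    rw [hXpr i j hji ω]
    simp [Wfun, Xfun, hji]
  have hW'i : ∀ (i : Fin N) ω,
      Wfun' p A i i (Xfun Z Atil (Sum.inl i) ω) (Xfun Z Atil (ASaux.pr i i) ω)
        = 1 - (Z i ω:ℝ) := by
    intro i ω; simp [Wfun', Wfun, Xfun]
  have hW'c : ∀ i j : Fin N, j ≠ i → ∀ ω,
      Wfun' p A i j (Xfun Z Atil (Sum.inl j) ω) (Xfun Z Atil (ASaux.pr i j) ω)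
        = ((1-p)^(Atil i j ω))⁻¹ * (1 - (Z j ω:ℝ)*(Atil i j ω:ℝ))
            * (1 - (Z j ω:ℝ)*((A i j):ℝ)) := by
    intro i j hji ω
    rw [Wfun', hWc i j hji ω, if_neg hji]
    rfl
  -- basic integrals
  have hIz : ∀ j : Fin N, Integrable (fun ω => (Z j ω:ℝ)) μ := by
    intro j
    refine ASaux.integrable_of_bound μ _ (castm.comp (hZmeas j)) 1 fun ω => ?_
    rcases hZ01 j ω with h | h <;> simp [h]
  have hIa : ∀ i j : Fin N, Integrable (fun ω => (Atil i j ω:ℝ)) μ := by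
    intro i j
    refine ASaux.integrable_of_bound μ _ (castm.comp (hmeas i j)) 1 fun ω => ?_
    rcases h01 i j ω with h | h <;> simp [h]
  have hEz : ∀ j : Fin N, ∫ ω, (Z j ω:ℝ) ∂μ = p := by
    intro j
    rw [ASaux.integral_nat01 μ _ (hZmeas j) (hZ01 j), hZp j, ENNReal.toReal_ofReal hp0.le]
  have hEz' : ∀ j : Fin N, ∫ ω, (1 - (Z j ω:ℝ)) ∂μ = 1 - p := by
    intro j
    rw [integral_sub (integrable_const 1) (hIz j), hEz j]
    simp
  have hEa : ∀ i j : Fin N,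
      ∫ ω, (Atil i j ω:ℝ) ∂μ = (μ {ω | Atil i j ω = 1}).toReal := fun i j =>
    ASaux.integral_nat01 μ _ (hmeas i j) (h01 i j)
  have hq1 : ∀ i j : Fin N, j ≠ i → A i j = 1 →
      (μ {ω | Atil i j ω = 1}).toReal = 1 - β := by
    intro i j hji hA1
    rcases lt_trichotomy i j with hij | hij | hij
    · rw [htrue i j hij hA1, ENNReal.toReal_ofReal (by linarith)]
    · exact absurd hij.symm hji
    · have hset : {ω | Atil i j ω = 1} = {ω | Atil j i ω = 1} := by
        ext ω; rw [Set.mem_setOf_eq, Set.mem_setOf_eq, hsymm i j ω]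
      rw [hset, htrue j i hij (by rw [hAsymm j i]; exact hA1),
        ENNReal.toReal_ofReal (by linarith)]
  -- expectation of a single W factor
  have hEW : ∀ i j : Fin N,
      ∫ ω, Wfun p i j (Xfun Z Atil (Sum.inl j) ω) (Xfun Z Atil (ASaux.pr i j) ω) ∂μ
        = if j = i then 1 - p else 1 := by
    intro i j
    by_cases hji : j = i
    · subst hji
      rw [if_pos rfl, show (fun ω => Wfun p j j (Xfun Z Atil (Sum.inl j) ω)
          (Xfun Z Atil (ASaux.pr j j) ω)) = fun ω => 1 - (Z j ω:ℝ) from funext (hWi j)]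
      exact hEz' j
    · rw [if_neg hji]
      have hpt : (fun ω => Wfun p i j (Xfun Z Atil (Sum.inl j) ω)
          (Xfun Z Atil (ASaux.pr i j) ω))
          = fun ω => (1 - (Atil i j ω:ℝ))
              + (1-p)⁻¹ * ((Atil i j ω:ℝ) * (1 - (Z j ω:ℝ))) := by
        funext ω
        rw [hWc i j hji ω]
        rcases h01 i j ω with h | h <;> rcases hZ01 j ω with h' | h' <;>
          rw [h, h'] <;> push_cast <;> field_simp <;> ring
      rw [hpt]
      have hindAZ : IndepFun (fun ω => (Atil i j ω:ℝ)) (fun ω => 1 - (Z j ω:ℝ)) μ := by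
        have h := (hindepX.indepFun (hprne i j hji)).comp
          (castm) (measurable_of_countable (fun n : ℕ => 1 - (n:ℝ)))
        have e1 : ((fun n : ℕ => (n:ℝ)) ∘ Xfun Z Atil (ASaux.pr i j))
            = fun ω => (Atil i j ω:ℝ) := funext fun ω => by
          simp [Function.comp_apply, hXpr i j hji ω]
        have e2 : ((fun n : ℕ => 1 - (n:ℝ)) ∘ Xfun Z Atil (Sum.inl j))
            = fun ω => 1 - (Z j ω:ℝ) := rfl
        rwa [e1, e2] at h
      have hImul : Integrable (fun ω => (Atil i j ω:ℝ) * (1 - (Z j ω:ℝ))) μ := by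
        refine ASaux.integrable_of_bound μ _
          ((castm.comp (hmeas i j)).mul ((measurable_const.sub (castm.comp (hZmeas j))))) 1
          fun ω => ?_
        rcases h01 i j ω with h | h <;> rcases hZ01 j ω with h' | h' <;> simp [h, h']
      have hI1 : Integrable (fun ω => 1 - (Atil i j ω:ℝ)) μ :=
        (integrable_const 1).sub (hIa i j)
      rw [integral_add hI1 (hImul.const_mul _),
        integral_sub (integrable_const 1) (hIa i j), integral_const_mul _ _,
        hindAZ.integral_fun_mul_eq_mul_integral ((castm.comp (hmeas i j)).aestronglyMeasurable)
          ((measurable_const.sub (castm.comp (hZmeas j))).aestronglyMeasurable),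
        hEa i j, hEz' j]
      have hmu : (1-p)⁻¹ * ((μ {ω | Atil i j ω = 1}).toReal * (1 - p))
          = (μ {ω | Atil i j ω = 1}).toReal := by
        field_simp
      rw [hmu]
      simp
  -- expectation of a single W' factor
  have hEW' : ∀ i j : Fin N,
      ∫ ω, Wfun' p A i j (Xfun Z Atil (Sum.inl j) ω) (Xfun Z Atil (ASaux.pr i j) ω) ∂μ
        = if j = i then 1 - p else (1 - β*p)^(A i j) := by
    intro i j
    by_cases hji : j = i
    · subst hji
      rw [if_pos rfl, show (fun ω => Wfun' p A j j (Xfun Z Atil (Sum.inl j) ω)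
          (Xfun Z Atil (ASaux.pr j j) ω)) = fun ω => 1 - (Z j ω:ℝ) from funext (hW'i j)]
      exact hEz' j
    · rw [if_neg hji]
      rcases hA01 i j with hA0 | hA1
      · have hpt : (fun ω => Wfun' p A i j (Xfun Z Atil (Sum.inl j) ω)
            (Xfun Z Atil (ASaux.pr i j) ω))
            = fun ω => Wfun p i j (Xfun Z Atil (Sum.inl j) ω)
                (Xfun Z Atil (ASaux.pr i j) ω) := by
          funext ω
          rw [Wfun', if_neg hji, hA0]
          push_cast
          ring
        rw [hpt, hEW i j, if_neg hji, hA0, pow_zero]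
      · have hpt : (fun ω => Wfun' p A i j (Xfun Z Atil (Sum.inl j) ω)
            (Xfun Z Atil (ASaux.pr i j) ω))
            = fun ω => (1 - (Z j ω:ℝ))
                * ((1 - (Atil i j ω:ℝ)) + (1-p)⁻¹ * (Atil i j ω:ℝ)) := by
          funext ω
          rw [hW'c i j hji ω, hA1]
          rcases h01 i j ω with h | h <;> rcases hZ01 j ω with h' | h' <;>
            rw [h, h'] <;> push_cast <;> field_simp <;> ring
        rw [hpt]
        have hindZA : IndepFun (fun ω => 1 - (Z j ω:ℝ))
            (fun ω => (1 - (Atil i j ω:ℝ)) + (1-p)⁻¹ * (Atil i j ω:ℝ)) μ := by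
          have h := (hindepX.indepFun (Ne.symm (hprne i j hji))).comp
            (measurable_of_countable (fun n : ℕ => 1 - (n:ℝ)))
            (measurable_of_countable (fun n : ℕ => (1 - (n:ℝ)) + (1-p)⁻¹ * (n:ℝ)))
          have e1 : ((fun n : ℕ => 1 - (n:ℝ)) ∘ Xfun Z Atil (Sum.inl j))
              = fun ω => 1 - (Z j ω:ℝ) := rfl
          have e2 : ((fun n : ℕ => (1 - (n:ℝ)) + (1-p)⁻¹ * (n:ℝ)) ∘ Xfun Z Atil (ASaux.pr i j))
              = fun ω => (1 - (Atil i j ω:ℝ)) + (1-p)⁻¹ * (Atil i j ω:ℝ) := funext fun ω => by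
            simp [Function.comp_apply, hXpr i j hji ω]
          rwa [e1, e2] at h
        rw [hindZA.integral_fun_mul_eq_mul_integral
          ((measurable_const.sub (castm.comp (hZmeas j))).aestronglyMeasurable)
          (((measurable_const.sub (castm.comp (hmeas i j))).add
            ((castm.comp (hmeas i j)).const_mul _)).aestronglyMeasurable),
          hEz' j]
        have hI1 : Integrable (fun ω => 1 - (Atil i j ω:ℝ)) μ :=
          (integrable_const 1).sub (hIa i j)
        rw [integral_add hI1 ((hIa i j).const_mul _),
          integral_sub (integrable_const 1) (hIa i j), integral_const_mul _ _,
          hEa i j, hq1 i j hji hA1, hA1, pow_one]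
        have h1 : ∫ (_ : Ω), (1:ℝ) ∂μ = 1 := by simp
        rw [h1]
        field_simp
        ring
  -- measurability of factors
  have hWm : ∀ i j : Fin N, Measurable (fun ω =>
      Wfun p i j (Xfun Z Atil (Sum.inl j) ω) (Xfun Z Atil (ASaux.pr i j) ω)) := by
    intro i j
    show Measurable ((Function.uncurry (Wfun p i j)) ∘ (fun ω =>
      (Xfun Z Atil (Sum.inl j) ω, Xfun Z Atil (ASaux.pr i j) ω)))
    exact (measurable_of_countable _).comp ((hXmeas _).prodMk (hXmeas _))
  have hW'm : ∀ i j : Fin N, Measurable (fun ω =>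
      Wfun' p A i j (Xfun Z Atil (Sum.inl j) ω) (Xfun Z Atil (ASaux.pr i j) ω)) := by
    intro i j
    show Measurable ((Function.uncurry (Wfun' p A i j)) ∘ (fun ω =>
      (Xfun Z Atil (Sum.inl j) ω, Xfun Z Atil (ASaux.pr i j) ω)))
    exact (measurable_of_countable _).comp ((hXmeas _).prodMk (hXmeas _))
  have hinv0 : (0:ℝ) ≤ (1-p)⁻¹ := by positivity
  -- bounds
  have hWb : ∀ i j : Fin N, ∀ ω, |Wfun p i j (Xfun Z Atil (Sum.inl j) ω)
      (Xfun Z Atil (ASaux.pr i j) ω)| ≤ 1 + (1-p)⁻¹ := by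
    intro i j ω
    by_cases hj : j = i
    · subst hj
      rw [hWi j ω]
      rcases hZ01 j ω with h | h <;> rw [h] <;> push_cast <;> norm_num <;> first | linarith | positivity
    · rw [hWc i j hj ω]
      rcases h01 i j ω with h | h <;> rcases hZ01 j ω with h' | h' <;> rw [h, h'] <;>
        push_cast <;> norm_num <;> first | (rw [abs_of_nonneg hinv0]; linarith) | (rw [abs_of_nonneg hp'.le]; linarith) | linarith | positivity
  have hW'b : ∀ i j : Fin N, ∀ ω, |Wfun' p A i j (Xfun Z Atil (Sum.inl j) ω)
      (Xfun Z Atil (ASaux.pr i j) ω)| ≤ 1 + (1-p)⁻¹ := by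
    intro i j ω
    by_cases hj : j = i
    · subst hj
      rw [hW'i j ω]
      rcases hZ01 j ω with h | h <;> rw [h] <;> push_cast <;> norm_num <;> first | linarith | positivity
    · rw [hW'c i j hj ω]
      rcases h01 i j ω with h | h <;> rcases hZ01 j ω with h' | h' <;>
        rcases hA01 i j with h'' | h'' <;> rw [h, h', h''] <;>
        push_cast <;> norm_num <;> first | (rw [abs_of_nonneg hinv0]; linarith) | (rw [abs_of_nonneg hp'.le]; linarith) | linarith | positivity
  -- integrability of products
  have hPWint : ∀ i : Fin N, Integrable (fun ω => ∏ j, Wfun p i j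
      (Xfun Z Atil (Sum.inl j) ω) (Xfun Z Atil (ASaux.pr i j) ω)) μ := by
    intro i
    refine ASaux.integrable_of_bound μ _ (Finset.measurable_prod _ fun j _ => hWm i j)
      ((1 + (1-p)⁻¹)^N) fun ω => ?_
    calc |∏ j, Wfun p i j (Xfun Z Atil (Sum.inl j) ω) (Xfun Z Atil (ASaux.pr i j) ω)|
        = ∏ j, |Wfun p i j (Xfun Z Atil (Sum.inl j) ω) (Xfun Z Atil (ASaux.pr i j) ω)| :=
          Finset.abs_prod _ _
      _ ≤ ∏ _j : Fin N, (1 + (1-p)⁻¹) :=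
          Finset.prod_le_prod (fun j _ => abs_nonneg _) (fun j _ => hWb i j ω)
      _ = (1 + (1-p)⁻¹)^N := by
          rw [Finset.prod_const, Finset.card_univ, Fintype.card_fin]
  have hPW'int : ∀ i : Fin N, Integrable (fun ω => ∏ j, Wfun' p A i j
      (Xfun Z Atil (Sum.inl j) ω) (Xfun Z Atil (ASaux.pr i j) ω)) μ := by
    intro i
    refine ASaux.integrable_of_bound μ _ (Finset.measurable_prod _ fun j _ => hW'm i j)
      ((1 + (1-p)⁻¹)^N) fun ω => ?_
    calc |∏ j, Wfun' p A i j (Xfun Z Atil (Sum.inl j) ω) (Xfun Z Atil (ASaux.pr i j) ω)|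
        = ∏ j, |Wfun' p A i j (Xfun Z Atil (Sum.inl j) ω) (Xfun Z Atil (ASaux.pr i j) ω)| :=
          Finset.abs_prod _ _
      _ ≤ ∏ _j : Fin N, (1 + (1-p)⁻¹) :=
          Finset.prod_le_prod (fun j _ => abs_nonneg _) (fun j _ => hW'b i j ω)
      _ = (1 + (1-p)⁻¹)^N := by
          rw [Finset.prod_const, Finset.card_univ, Fintype.card_fin]
  -- integrals of products
  have hPW : ∀ i : Fin N, ∫ ω, ∏ j, Wfun p i j
      (Xfun Z Atil (Sum.inl j) ω) (Xfun Z Atil (ASaux.pr i j) ω) ∂μ = 1 - p := by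
    intro i
    rw [ASaux.prod_integral μ (Xfun Z Atil) hXmeas hindepX i (Wfun p i) Finset.univ,
      Finset.prod_congr rfl fun j _ => hEW i j]
    simp
  have hPW' : ∀ i : Fin N, ∫ ω, ∏ j, Wfun' p A i j
      (Xfun Z Atil (Sum.inl j) ω) (Xfun Z Atil (ASaux.pr i j) ω) ∂μ
        = (1 - p) * (1 - β*p)^(∑ j, A i j) := by
    intro i
    rw [ASaux.prod_integral μ (Xfun Z Atil) hXmeas hindepX i (Wfun' p A i) Finset.univ,
      Finset.prod_congr rfl fun j _ => hEW' i j]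
    have hsplit : ∀ j : Fin N, (if j = i then 1 - p else (1 - β*p)^(A i j))
        = (if j = i then 1 - p else 1) * (1 - β*p)^(A i j) := by
      intro j
      by_cases hj : j = i
      · subst hj; rw [if_pos rfl, if_pos rfl, hAdiag, pow_zero, mul_one]
      · rw [if_neg hj, if_neg hj, one_mul]
    rw [Finset.prod_congr rfl fun j _ => hsplit j, Finset.prod_mul_distrib,
      Finset.prod_pow_eq_pow_sum]
    congr 1
    simp
  -- pointwise identity
  have hTeq : ∀ (i : Fin N) (ω : Ω),
      ((if 0 < (1 - p) ^ ((∑ j, Atil i j ω) + 1) then (1:ℝ) else 0)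
        * (if Z i ω = 0 ∧ (∑ j, Z j ω * Atil i j ω) = 0 then (1:ℝ) else 0)
        * ((1 - p) ^ ((∑ j, Atil i j ω) + 1))⁻¹
        * (if Z i ω = 1 then
            (if 0 < ∑ j, Z j ω * A i j then y i 0 else y i 1)
           else
            (if 0 < ∑ j, Z j ω * A i j then y i 2 else y i 3)))
      = (1-p)⁻¹ * ((∏ j, Wfun p i j (Xfun Z Atil (Sum.inl j) ω)
            (Xfun Z Atil (ASaux.pr i j) ω)) * y i 2
          + (∏ j, Wfun' p A i j (Xfun Z Atil (Sum.inl j) ω)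
            (Xfun Z Atil (ASaux.pr i j) ω)) * (y i 3 - y i 2)) := by
    intro i ω
    rw [if_pos (pow_pos hp' _), one_mul]
    rcases hZ01 i ω with hzi | hzi
    · by_cases hS : (∑ j, Z j ω * Atil i j ω) = 0
      · rw [if_pos ⟨hzi, hS⟩, one_mul, if_neg (by simp [hzi])]
        have hcast : ∀ j : Fin N, (Z j ω:ℝ) * (Atil i j ω:ℝ) = 0 := by
          intro j
          exact_mod_cast Finset.sum_eq_zero_iff.mp hS j (Finset.mem_univ j)
        have hWval : ∀ j : Fin N, Wfun p i j (Xfun Z Atil (Sum.inl j) ω)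
            (Xfun Z Atil (ASaux.pr i j) ω) = ((1-p)^(Atil i j ω))⁻¹ := by
          intro j
          by_cases hj : j = i
          · subst hj
            rw [hWi j ω, hzi, hdiag j ω]
            norm_num
          · rw [hWc i j hj ω, hcast j]
            ring
        have hW'val : ∀ j : Fin N, Wfun' p A i j (Xfun Z Atil (Sum.inl j) ω)
            (Xfun Z Atil (ASaux.pr i j) ω)
              = ((1-p)^(Atil i j ω))⁻¹ * (1 - (Z j ω:ℝ)*((A i j):ℝ)) := by
          intro j
          by_cases hj : j = i
          · subst hj
            rw [hW'i j ω, hzi, hdiag j ω, hAdiag j]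
            norm_num
          · rw [hW'c i j hj ω, hcast j]
            ring
        rw [Finset.prod_congr rfl fun j _ => hWval j,
          Finset.prod_congr rfl fun j _ => hW'val j, Finset.prod_mul_distrib,
          Finset.prod_inv_distrib, Finset.prod_pow_eq_pow_sum]
        by_cases hQ : (∑ j, Z j ω * A i j) = 0
        · have hQ1 : (∏ j, (1 - (Z j ω:ℝ)*((A i j):ℝ))) = 1 := by
            refine Finset.prod_eq_one fun j _ => ?_
            have h0 : (Z j ω:ℝ) * ((A i j):ℝ) = 0 := by
              exact_mod_cast Finset.sum_eq_zero_iff.mp hQ j (Finset.mem_univ j)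
            rw [h0]; ring
          rw [hQ1, if_neg (by simp [hQ]), pow_succ, mul_inv]
          ring
        · rw [if_pos (Nat.pos_of_ne_zero hQ)]
          obtain ⟨j, hj⟩ : ∃ j, Z j ω * A i j ≠ 0 := by
            by_contra h
            push_neg at h
            exact hQ (Finset.sum_eq_zero fun j _ => h j)
          have hfac : (1 - (Z j ω:ℝ)*((A i j):ℝ)) = 0 := by
            have hz1 : Z j ω = 1 := (hZ01 j ω).resolve_left fun h => hj (by rw [h, zero_mul])
            have ha1 : A i j = 1 := (hA01 i j).resolve_left fun h => hj (by rw [h, mul_zero])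
            rw [hz1, ha1]
            norm_num
          rw [Finset.prod_eq_zero (Finset.mem_univ j) hfac, pow_succ, mul_inv]
          ring
      · rw [if_neg (fun hcon => hS hcon.2)]
        obtain ⟨j, hj⟩ : ∃ j, Z j ω * Atil i j ω ≠ 0 := by
          by_contra h
          push_neg at h
          exact hS (Finset.sum_eq_zero fun j _ => h j)
        have hji : j ≠ i := by
          rintro rfl
          exact hj (by rw [hdiag j ω, mul_zero])
        have hz1 : Z j ω = 1 := (hZ01 j ω).resolve_left fun h => hj (by rw [h, zero_mul])
        have ha1 : Atil i j ω = 1 := (h01 i j ω).resolve_left fun h => hj (by rw [h, mul_zero])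
        have h0 : Wfun p i j (Xfun Z Atil (Sum.inl j) ω) (Xfun Z Atil (ASaux.pr i j) ω) = 0 := by
          rw [hWc i j hji ω, hz1, ha1]
          norm_num
        have h0' : Wfun' p A i j (Xfun Z Atil (Sum.inl j) ω)
            (Xfun Z Atil (ASaux.pr i j) ω) = 0 := by
          rw [hW'c i j hji ω, hz1, ha1]
          push_cast
          ring
        rw [Finset.prod_eq_zero (Finset.mem_univ j) h0,
          Finset.prod_eq_zero (Finset.mem_univ j) h0']
        ring
    · rw [if_neg (by simp [hzi])]
      have h0 : Wfun p i i (Xfun Z Atil (Sum.inl i) ω) (Xfun Z Atil (ASaux.pr i i) ω) = 0 := by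
        rw [hWi i ω, hzi]
        norm_num
      have h0' : Wfun' p A i i (Xfun Z Atil (Sum.inl i) ω)
          (Xfun Z Atil (ASaux.pr i i) ω) = 0 := by
        rw [hW'i i ω, hzi]
        norm_num
      rw [Finset.prod_eq_zero (Finset.mem_univ i) h0,
        Finset.prod_eq_zero (Finset.mem_univ i) h0']
      ring
  -- per-i integrals
  have hTint : ∀ i : Fin N, Integrable (fun ω => (1-p)⁻¹ *
      ((∏ j, Wfun p i j (Xfun Z Atil (Sum.inl j) ω) (Xfun Z Atil (ASaux.pr i j) ω)) * y i 2
        + (∏ j, Wfun' p A i j (Xfun Z Atil (Sum.inl j) ω)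
            (Xfun Z Atil (ASaux.pr i j) ω)) * (y i 3 - y i 2))) μ := by
    intro i
    exact ((((hPWint i).mul_const _).add ((hPW'int i).mul_const _)).const_mul _)
  have hval : ∀ i : Fin N, ∫ ω, (1-p)⁻¹ *
      ((∏ j, Wfun p i j (Xfun Z Atil (Sum.inl j) ω) (Xfun Z Atil (ASaux.pr i j) ω)) * y i 2
        + (∏ j, Wfun' p A i j (Xfun Z Atil (Sum.inl j) ω)
            (Xfun Z Atil (ASaux.pr i j) ω)) * (y i 3 - y i 2)) ∂μ
      = y i 2 + (1 - β*p)^(∑ j, A i j) * (y i 3 - y i 2) := by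
    intro i
    rw [integral_const_mul _ _,
      integral_add ((hPWint i).mul_const _) ((hPW'int i).mul_const _),
      integral_mul_const, integral_mul_const, hPW i, hPW' i]
    field_simp
  -- assemble
  have hcong : (∫ ω, (N : ℝ)⁻¹ * ∑ i,
        ((if 0 < (1 - p) ^ ((∑ j, Atil i j ω) + 1) then (1:ℝ) else 0)
          * (if Z i ω = 0 ∧ (∑ j, Z j ω * Atil i j ω) = 0 then (1:ℝ) else 0)
          * ((1 - p) ^ ((∑ j, Atil i j ω) + 1))⁻¹
          * (if Z i ω = 1 then
              (if 0 < ∑ j, Z j ω * A i j then y i 0 else y i 1)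
             else
              (if 0 < ∑ j, Z j ω * A i j then y i 2 else y i 3))) ∂μ)
      = ∫ ω, (N : ℝ)⁻¹ * ∑ i, (1-p)⁻¹ *
        ((∏ j, Wfun p i j (Xfun Z Atil (Sum.inl j) ω) (Xfun Z Atil (ASaux.pr i j) ω)) * y i 2
          + (∏ j, Wfun' p A i j (Xfun Z Atil (Sum.inl j) ω)
              (Xfun Z Atil (ASaux.pr i j) ω)) * (y i 3 - y i 2)) ∂μ := by
    refine integral_congr_ae (Filter.EventuallyEq.of_eq (funext fun ω => ?_))
    rw [Finset.sum_congr rfl fun i _ => hTeq i ω]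
  rw [hcong, integral_const_mul _ _, integral_finset_sum _ fun i _ => hTint i,
    Finset.sum_congr rfl fun i _ => hval i, ← mul_sub, ← Finset.sum_sub_distrib]
  congr 1
  exact Finset.sum_congr rfl fun i _ => by ring
end

section
/- Let G be a simple undirected graph on N vertices with edge density δ = 2|E|/(N(N−1)), and let Ã, Ã_*, Ã_{**} be three i.i.d. noisy observations of G with error rates α (false edges) and β (missed edges), entries independent across vertex pairs. Define û_1 = (2/(N(N−1))) Σ_{i<j} Ã_{ij}, û_2 = (1/(N(N−1))) Σ_{i<j} |Ã_{ij,*} − Ã_{ij}|, and û_3 = (2/(3N(N−1))) Σ_{i<j} I{exactly one of Ã_{ij,**}, Ã_{ij,*}, Ã_{ij} equals 1}. Then E[û_1] = (1−δ)α + δ(1−β), E[û_2] = (1−δ)α(1−α) + δβ(1−β), and E[û_3] = (1−δ)α(1−α)² + δβ²(1−β). -/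
open MeasureTheory ProbabilityTheory Filter

private lemma sum_split_aux {N : ℕ} (f : Fin N × Fin N → ℝ)
    (hsym : ∀ i j, f (i, j) = f (j, i)) (hdiag : ∀ i, f (i, i) = 0) :
    ∑ i, ∑ j, f (i, j)
      = 2 * ∑ e ∈ Finset.univ.filter (fun e : Fin N × Fin N => e.1 < e.2), f e := by
  classical
  have h0 : ∑ i, ∑ j, f (i, j) = ∑ e ∈ (Finset.univ : Finset (Fin N × Fin N)), f e := by
    rw [← Finset.sum_product']
    simp
  have h1 := Finset.sum_filter_add_sum_filter_not (Finset.univ : Finset (Fin N × Fin N))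
      (fun e => e.1 < e.2) f
  have hgt : ∑ e ∈ Finset.univ.filter (fun e : Fin N × Fin N => e.2 < e.1), f e
      = ∑ e ∈ Finset.univ.filter (fun e : Fin N × Fin N => e.1 < e.2), f e := by
    refine Finset.sum_nbij' Prod.swap Prod.swap ?_ ?_ ?_ ?_ ?_
    · intro a ha
      simpa using (Finset.mem_filter.mp ha).2
    · intro a ha
      simpa using (Finset.mem_filter.mp ha).2
    · intro a _; exact Prod.swap_swap a
    · intro a _; exact Prod.swap_swap a
    · rintro ⟨x, y⟩ _
      exact hsym x y
  have h2 : ∑ e ∈ Finset.univ.filter (fun e : Fin N × Fin N => ¬ e.1 < e.2), f e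
      = ∑ e ∈ Finset.univ.filter (fun e : Fin N × Fin N => e.1 < e.2), f e := by
    rw [← Finset.sum_filter_add_sum_filter_not
        (Finset.univ.filter (fun e : Fin N × Fin N => ¬ e.1 < e.2))
        (fun e => e.2 < e.1) f]
    have hz : ∑ e ∈ (Finset.univ.filter (fun e : Fin N × Fin N => ¬ e.1 < e.2)).filter
        (fun e => ¬ e.2 < e.1), f e = 0 := by
      apply Finset.sum_eq_zero
      rintro ⟨x, y⟩ he
      simp only [Finset.mem_filter, not_lt] at he
      have hxy : x = y := le_antisymm he.2 he.1.2
      subst hxy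
      exact hdiag x
    have hset : (Finset.univ.filter (fun e : Fin N × Fin N => ¬ e.1 < e.2)).filter
        (fun e => e.2 < e.1) = Finset.univ.filter (fun e : Fin N × Fin N => e.2 < e.1) := by
      rw [Finset.filter_filter]
      apply Finset.filter_congr
      intro e _
      constructor
      · exact fun h => h.2
      · exact fun h => ⟨lt_asymm h, h⟩
    rw [hz, add_zero, hset, hgt]
  rw [h0, ← h1, h2]
  ring

/-- With three i.i.d. noisy observations `B 0 = Ã`, `B 1 = Ã_*`,
`B 2 = Ã_{**}` of a graph with edge density `δ`, the statistics `û₁, û₂, û₃` have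
expectations `(1−δ)α + δ(1−β)`, `(1−δ)α(1−α) + δβ(1−β)` and
`(1−δ)α(1−α)² + δβ²(1−β)` respectively. -/
theorem replicate_moment_estimators_expectation
    {Ω : Type} [MeasurableSpace Ω] (μ : Measure Ω) [IsProbabilityMeasure μ]
    (N : ℕ) (hN : 2 ≤ N)
    (A : Fin N → Fin N → ℕ)
    (hAsymm : ∀ i j, A i j = A j i)
    (hAdiag : ∀ i, A i i = 0)
    (hA01 : ∀ i j, A i j = 0 ∨ A i j = 1)
    (α β : ℝ) (hα0 : 0 ≤ α) (hα1 : α ≤ 1) (hβ0 : 0 ≤ β) (hβ1 : β ≤ 1)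
    -- edge density δ = 2|E|/(N(N−1))
    (δ : ℝ) (hδ : δ = (∑ i, ∑ j, (A i j : ℝ)) / ((N : ℝ) * ((N : ℝ) - 1)))
    -- three noisy observations, each symmetric with zero diagonal and 0/1 entries
    (B : Fin 3 → Fin N → Fin N → Ω → ℕ)
    (hmeas : ∀ t i j, Measurable (B t i j))
    (hsymm : ∀ t i j ω, B t i j ω = B t j i ω)
    (hdiag : ∀ t i ω, B t i i ω = 0)
    (h01 : ∀ t i j ω, B t i j ω = 0 ∨ B t i j ω = 1)
    (hfalse : ∀ t, ∀ i j : Fin N, i < j → A i j = 0 →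
      μ {ω | B t i j ω = 1} = ENNReal.ofReal α)
    (htrue : ∀ t, ∀ i j : Fin N, i < j → A i j = 1 →
      μ {ω | B t i j ω = 1} = ENNReal.ofReal (1 - β))
    -- all above-diagonal entries of all three observations are jointly independent
    (hindep : iIndepFun
      (fun et : {e : Fin N × Fin N // e.1 < e.2} × Fin 3 =>
        B et.2 et.1.1.1 et.1.1.2) μ) :
    -- E[û₁]
    (∫ ω, (2 / ((N : ℝ) * ((N : ℝ) - 1)))
        * ∑ e ∈ Finset.univ.filter (fun e : Fin N × Fin N => e.1 < e.2),
            (B 0 e.1 e.2 ω : ℝ) ∂μ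
      = (1 - δ) * α + δ * (1 - β)) ∧
    -- E[û₂]
    (∫ ω, (1 / ((N : ℝ) * ((N : ℝ) - 1)))
        * ∑ e ∈ Finset.univ.filter (fun e : Fin N × Fin N => e.1 < e.2),
            |(B 1 e.1 e.2 ω : ℝ) - (B 0 e.1 e.2 ω : ℝ)| ∂μ
      = (1 - δ) * α * (1 - α) + δ * β * (1 - β)) ∧
    -- E[û₃]
    (∫ ω, (2 / (3 * (N : ℝ) * ((N : ℝ) - 1)))
        * ∑ e ∈ Finset.univ.filter (fun e : Fin N × Fin N => e.1 < e.2),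
            (if (B 2 e.1 e.2 ω = 1 ∧ B 1 e.1 e.2 ω ≠ 1 ∧ B 0 e.1 e.2 ω ≠ 1)
              ∨ (B 2 e.1 e.2 ω ≠ 1 ∧ B 1 e.1 e.2 ω = 1 ∧ B 0 e.1 e.2 ω ≠ 1)
              ∨ (B 2 e.1 e.2 ω ≠ 1 ∧ B 1 e.1 e.2 ω ≠ 1 ∧ B 0 e.1 e.2 ω = 1)
             then (1 : ℝ) else 0) ∂μ
      = (1 - δ) * α * (1 - α) ^ 2 + δ * β ^ 2 * (1 - β)) := by
  classical
  set E := Finset.univ.filter (fun e : Fin N × Fin N => e.1 < e.2) with hE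
  set c : ℝ := (N : ℝ) * ((N : ℝ) - 1) with hc
  have hN2 : (2 : ℝ) ≤ (N : ℝ) := by exact_mod_cast hN
  have hcpos : 0 < c := by
    rw [hc]; nlinarith
  have hcne : c ≠ 0 := ne_of_gt hcpos
  set p : Fin N × Fin N → ℝ := fun e => if A e.1 e.2 = 1 then 1 - β else α with hp
  have hp0 : ∀ e, 0 ≤ p e := by
    intro e; by_cases h : A e.1 e.2 = 1 <;> simp only [hp, h, if_true, if_false] <;> linarith
  have hp1 : ∀ e, p e ≤ 1 := by
    intro e; by_cases h : A e.1 e.2 = 1 <;> simp only [hp, h, if_true, if_false] <;> linarith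
  -- events
  set S : Fin 3 → (Fin N × Fin N) → Set Ω := fun t e => {ω | B t e.1 e.2 ω = 1} with hS
  have hSpre : ∀ t e, S t e = B t e.1 e.2 ⁻¹' {1} := fun t e => rfl
  have hSmeas : ∀ t e, MeasurableSet (S t e) := fun t e =>
    (hmeas t e.1 e.2) (measurableSet_singleton 1)
  have hμS : ∀ t, ∀ e ∈ E, μ (S t e) = ENNReal.ofReal (p e) := by
    intro t e he
    have he' : e.1 < e.2 := (Finset.mem_filter.mp he).2
    rcases hA01 e.1 e.2 with h | h
    · rw [hS]
      rw [hfalse t e.1 e.2 he' h]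
      simp [hp, h]
    · rw [hS]
      rw [htrue t e.1 e.2 he' h]
      simp [hp, h]
  have hμSc : ∀ t, ∀ e ∈ E, μ (S t e)ᶜ = ENNReal.ofReal (1 - p e) := by
    intro t e he
    rw [prob_compl_eq_one_sub (hSmeas t e), hμS t e he, ← ENNReal.ofReal_one,
      ← ENNReal.ofReal_sub _ (hp0 e)]
  -- pairwise independence at a fixed edge
  have hpair : ∀ e : Fin N × Fin N, ∀ he : e.1 < e.2,
      IndepFun (B 1 e.1 e.2) (B 0 e.1 e.2) μ := by
    intro e he
    exact hindep.indepFun (i := (⟨e, he⟩, 1)) (j := (⟨e, he⟩, 0)) (by simp)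
  -- triple independence at a fixed edge
  have htriple : ∀ e : Fin N × Fin N, ∀ _ : e.1 < e.2, ∀ s0 s1 s2 : Set ℕ,
      MeasurableSet s0 → MeasurableSet s1 → MeasurableSet s2 →
      μ (B 2 e.1 e.2 ⁻¹' s2 ∩ (B 1 e.1 e.2 ⁻¹' s1 ∩ B 0 e.1 e.2 ⁻¹' s0))
        = μ (B 2 e.1 e.2 ⁻¹' s2) * (μ (B 1 e.1 e.2 ⁻¹' s1) * μ (B 0 e.1 e.2 ⁻¹' s0)) := by
    intro e he s0 s1 s2 hs0 hs1 hs2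
    set ι := {e : Fin N × Fin N // e.1 < e.2} × Fin 3 with hι
    set i0 : ι := (⟨e, he⟩, 0) with hi0
    set i1 : ι := (⟨e, he⟩, 1) with hi1
    set i2 : ι := (⟨e, he⟩, 2) with hi2
    set sets : ι → Set ℕ := fun et => if et.2 = 0 then s0 else if et.2 = 1 then s1 else s2
      with hsets
    have hne21 : i2 ≠ i1 := fun h => (by decide : (2 : Fin 3) ≠ 1) (congrArg Prod.snd h)
    have hne20 : i2 ≠ i0 := fun h => (by decide : (2 : Fin 3) ≠ 0) (congrArg Prod.snd h)
    have hne10 : i1 ≠ i0 := fun h => (by decide : (1 : Fin 3) ≠ 0) (congrArg Prod.snd h)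
    have key := hindep.measure_inter_preimage_eq_mul (S := {i2, i1, i0}) (sets := sets)
      (fun i hi => by
        simp only [Finset.mem_insert, Finset.mem_singleton] at hi
        rcases hi with rfl | rfl | rfl <;>
          simp only [hsets, hi0, hi1, hi2] <;>
          first
            | exact hs2
            | exact hs1
            | exact hs0
            | (norm_num; first | exact hs2 | exact hs1 | exact hs0))
    rw [Finset.set_biInter_insert, Finset.set_biInter_insert, Finset.set_biInter_singleton,
      Finset.prod_insert (by simp [hne21, hne20]),
      Finset.prod_insert (by simpa using hne10), Finset.prod_singleton] at key
    have e2 : sets i2 = s2 := by simp [hsets, hi2]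
    have e1 : sets i1 = s1 := by simp [hsets, hi1]
    have e0 : sets i0 = s0 := by simp [hsets, hi0]
    rw [e2, e1, e0] at key
    exact key
  -- composite events
  set D2 : (Fin N × Fin N) → Set Ω :=
    fun e => (S 1 e ∩ (S 0 e)ᶜ) ∪ ((S 1 e)ᶜ ∩ S 0 e) with hD2
  set D3 : (Fin N × Fin N) → Set Ω :=
    fun e => ((S 2 e ∩ ((S 1 e)ᶜ ∩ (S 0 e)ᶜ)) ∪ ((S 2 e)ᶜ ∩ (S 1 e ∩ (S 0 e)ᶜ)))
      ∪ ((S 2 e)ᶜ ∩ ((S 1 e)ᶜ ∩ S 0 e)) with hD3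
  have hD2meas : ∀ e, MeasurableSet (D2 e) := fun e =>
    (((hSmeas 1 e).inter (hSmeas 0 e).compl).union ((hSmeas 1 e).compl.inter (hSmeas 0 e)))
  have hD3meas : ∀ e, MeasurableSet (D3 e) := fun e =>
    ((((hSmeas 2 e).inter ((hSmeas 1 e).compl.inter (hSmeas 0 e).compl)).union
      ((hSmeas 2 e).compl.inter ((hSmeas 1 e).inter (hSmeas 0 e).compl))).union
      ((hSmeas 2 e).compl.inter ((hSmeas 1 e).compl.inter (hSmeas 0 e))))
  -- value of per-edge expectations
  have hq0 : ∀ e, 0 ≤ 1 - p e := fun e => by linarith [hp1 e]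
  have hv1 : ∀ e ∈ E, (μ (S 0 e)).toReal = p e := by
    intro e he
    rw [hμS 0 e he, ENNReal.toReal_ofReal (hp0 e)]
  have hv2 : ∀ e ∈ E, (μ (D2 e)).toReal = p e * (1 - p e) + (1 - p e) * p e := by
    intro e he
    have he' : e.1 < e.2 := (Finset.mem_filter.mp he).2
    have hd : Disjoint (S 1 e ∩ (S 0 e)ᶜ) ((S 1 e)ᶜ ∩ S 0 e) := by
      refine Set.disjoint_left.mpr ?_
      rintro ω ⟨h1, -⟩ ⟨h1', -⟩
      exact h1' h1
    have hma : μ (S 1 e ∩ (S 0 e)ᶜ) = ENNReal.ofReal (p e * (1 - p e)) := by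
      have h := (hpair e he').measure_inter_preimage_eq_mul (s := {1}) (t := {1}ᶜ)
        (measurableSet_singleton 1) (measurableSet_singleton 1).compl
      rw [Set.preimage_compl] at h
      rw [← hSpre 1 e, ← hSpre 0 e] at h
      rw [h, hμS 1 e he, hμSc 0 e he, ← ENNReal.ofReal_mul (hp0 e)]
    have hmb : μ ((S 1 e)ᶜ ∩ S 0 e) = ENNReal.ofReal ((1 - p e) * p e) := by
      have h := (hpair e he').measure_inter_preimage_eq_mul (s := {1}ᶜ) (t := {1})
        (measurableSet_singleton 1).compl (measurableSet_singleton 1)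
      rw [Set.preimage_compl] at h
      rw [← hSpre 1 e, ← hSpre 0 e] at h
      rw [h, hμS 0 e he, hμSc 1 e he, ← ENNReal.ofReal_mul (hq0 e)]
    rw [hD2]
    rw [measure_union hd ((hSmeas 1 e).compl.inter (hSmeas 0 e)), hma, hmb,
      ← ENNReal.ofReal_add (mul_nonneg (hp0 e) (hq0 e)) (mul_nonneg (hq0 e) (hp0 e)),
      ENNReal.toReal_ofReal
        (add_nonneg (mul_nonneg (hp0 e) (hq0 e)) (mul_nonneg (hq0 e) (hp0 e)))]
  have hv3 : ∀ e ∈ E, (μ (D3 e)).toReal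
      = p e * ((1 - p e) * (1 - p e)) + (1 - p e) * (p e * (1 - p e))
        + (1 - p e) * ((1 - p e) * p e) := by
    intro e he
    have he' : e.1 < e.2 := (Finset.mem_filter.mp he).2
    have hX : μ (S 2 e ∩ ((S 1 e)ᶜ ∩ (S 0 e)ᶜ))
        = ENNReal.ofReal (p e * ((1 - p e) * (1 - p e))) := by
      have h := htriple e he' {1}ᶜ {1}ᶜ {1}
        (measurableSet_singleton 1).compl (measurableSet_singleton 1).compl
        (measurableSet_singleton 1)
      rw [Set.preimage_compl, Set.preimage_compl] at h
      rw [← hSpre 2 e, ← hSpre 1 e, ← hSpre 0 e] at h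
      rw [h, hμS 2 e he, hμSc 1 e he, hμSc 0 e he,
        ← ENNReal.ofReal_mul (hq0 e), ← ENNReal.ofReal_mul (hp0 e)]
    have hY : μ ((S 2 e)ᶜ ∩ (S 1 e ∩ (S 0 e)ᶜ))
        = ENNReal.ofReal ((1 - p e) * (p e * (1 - p e))) := by
      have h := htriple e he' {1}ᶜ {1} {1}ᶜ
        (measurableSet_singleton 1).compl (measurableSet_singleton 1)
        (measurableSet_singleton 1).compl
      rw [Set.preimage_compl, Set.preimage_compl] at h
      rw [← hSpre 2 e, ← hSpre 1 e, ← hSpre 0 e] at h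
      rw [h, hμSc 2 e he, hμS 1 e he, hμSc 0 e he,
        ← ENNReal.ofReal_mul (hp0 e), ← ENNReal.ofReal_mul (hq0 e)]
    have hZ : μ ((S 2 e)ᶜ ∩ ((S 1 e)ᶜ ∩ S 0 e))
        = ENNReal.ofReal ((1 - p e) * ((1 - p e) * p e)) := by
      have h := htriple e he' {1} {1}ᶜ {1}ᶜ
        (measurableSet_singleton 1) (measurableSet_singleton 1).compl
        (measurableSet_singleton 1).compl
      rw [Set.preimage_compl, Set.preimage_compl] at h
      rw [← hSpre 2 e, ← hSpre 1 e, ← hSpre 0 e] at h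
      rw [h, hμSc 2 e he, hμSc 1 e he, hμS 0 e he,
        ← ENNReal.ofReal_mul (hq0 e), ← ENNReal.ofReal_mul (hq0 e)]
    have hd1 : Disjoint (S 2 e ∩ ((S 1 e)ᶜ ∩ (S 0 e)ᶜ)) ((S 2 e)ᶜ ∩ (S 1 e ∩ (S 0 e)ᶜ)) := by
      refine Set.disjoint_left.mpr ?_
      rintro ω ⟨h2, -⟩ ⟨h2', -⟩
      exact h2' h2
    have hd2 : Disjoint ((S 2 e ∩ ((S 1 e)ᶜ ∩ (S 0 e)ᶜ)) ∪ ((S 2 e)ᶜ ∩ (S 1 e ∩ (S 0 e)ᶜ)))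
        ((S 2 e)ᶜ ∩ ((S 1 e)ᶜ ∩ S 0 e)) := by
      refine Set.disjoint_left.mpr ?_
      rintro ω (⟨-, -, h0⟩ | ⟨-, -, h0⟩) ⟨-, -, h0'⟩ <;> exact h0 h0'
    rw [hD3]
    rw [measure_union hd2 ((hSmeas 2 e).compl.inter ((hSmeas 1 e).compl.inter (hSmeas 0 e))),
      measure_union hd1 ((hSmeas 2 e).compl.inter ((hSmeas 1 e).inter (hSmeas 0 e).compl)),
      hX, hY, hZ]
    have n1 : 0 ≤ p e * ((1 - p e) * (1 - p e)) := mul_nonneg (hp0 e) (mul_nonneg (hq0 e) (hq0 e))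
    have n2 : 0 ≤ (1 - p e) * (p e * (1 - p e)) := mul_nonneg (hq0 e) (mul_nonneg (hp0 e) (hq0 e))
    have n3 : 0 ≤ (1 - p e) * ((1 - p e) * p e) := mul_nonneg (hq0 e) (mul_nonneg (hq0 e) (hp0 e))
    rw [← ENNReal.ofReal_add n1 n2, ← ENNReal.ofReal_add (add_nonneg n1 n2) n3,
      ENNReal.toReal_ofReal (add_nonneg (add_nonneg n1 n2) n3)]
  -- pointwise identities
  have hpt1 : ∀ (e : Fin N × Fin N) (ω : Ω),
      (B 0 e.1 e.2 ω : ℝ) = (S 0 e).indicator (1 : Ω → ℝ) ω := by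
    intro e ω
    rcases h01 0 e.1 e.2 ω with h | h <;>
      simp [hS, Set.indicator_apply, h]
  have hpt2 : ∀ (e : Fin N × Fin N) (ω : Ω),
      |(B 1 e.1 e.2 ω : ℝ) - (B 0 e.1 e.2 ω : ℝ)| = (D2 e).indicator (1 : Ω → ℝ) ω := by
    intro e ω
    rcases h01 1 e.1 e.2 ω with h1 | h1 <;> rcases h01 0 e.1 e.2 ω with h0 | h0 <;>
      simp [hD2, hS, Set.indicator_apply, h1, h0]
  have hpt3 : ∀ (e : Fin N × Fin N) (ω : Ω),
      (if (B 2 e.1 e.2 ω = 1 ∧ B 1 e.1 e.2 ω ≠ 1 ∧ B 0 e.1 e.2 ω ≠ 1)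
          ∨ (B 2 e.1 e.2 ω ≠ 1 ∧ B 1 e.1 e.2 ω = 1 ∧ B 0 e.1 e.2 ω ≠ 1)
          ∨ (B 2 e.1 e.2 ω ≠ 1 ∧ B 1 e.1 e.2 ω ≠ 1 ∧ B 0 e.1 e.2 ω = 1)
        then (1 : ℝ) else 0) = (D3 e).indicator (1 : Ω → ℝ) ω := by
    intro e ω
    have hmem : ω ∈ D3 e ↔ ((B 2 e.1 e.2 ω = 1 ∧ B 1 e.1 e.2 ω ≠ 1 ∧ B 0 e.1 e.2 ω ≠ 1)
        ∨ (B 2 e.1 e.2 ω ≠ 1 ∧ B 1 e.1 e.2 ω = 1 ∧ B 0 e.1 e.2 ω ≠ 1)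
        ∨ (B 2 e.1 e.2 ω ≠ 1 ∧ B 1 e.1 e.2 ω ≠ 1 ∧ B 0 e.1 e.2 ω = 1)) := by
      simp [hD3, hS, Set.mem_union, Set.mem_inter_iff, Set.mem_compl_iff,
        Set.mem_setOf_eq, or_assoc]
    by_cases hcond : (B 2 e.1 e.2 ω = 1 ∧ B 1 e.1 e.2 ω ≠ 1 ∧ B 0 e.1 e.2 ω ≠ 1)
        ∨ (B 2 e.1 e.2 ω ≠ 1 ∧ B 1 e.1 e.2 ω = 1 ∧ B 0 e.1 e.2 ω ≠ 1)
        ∨ (B 2 e.1 e.2 ω ≠ 1 ∧ B 1 e.1 e.2 ω ≠ 1 ∧ B 0 e.1 e.2 ω = 1)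
    · rw [if_pos hcond, Set.indicator_of_mem (hmem.mpr hcond)]
      rfl
    · rw [if_neg hcond, Set.indicator_of_notMem (fun hm => hcond (hmem.mp hm))]
  -- master integral lemma
  have master : ∀ D : (Fin N × Fin N) → Set Ω, (∀ e, MeasurableSet (D e)) →
      ∫ ω, ∑ e ∈ E, (D e).indicator (1 : Ω → ℝ) ω ∂μ = ∑ e ∈ E, (μ (D e)).toReal := by
    intro D hD
    have hint : ∀ e ∈ E, Integrable (fun ω => (D e).indicator (1 : Ω → ℝ) ω) μ :=
      fun e _ => (integrable_const (1 : ℝ)).indicator (hD e)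
    refine (integral_finset_sum E hint).trans ?_
    exact Finset.sum_congr rfl fun e _ => integral_indicator_one (hD e)
  -- counting
  set m : ℝ := ∑ e ∈ E, (A e.1 e.2 : ℝ) with hmdef
  have h2m : δ * c = 2 * m := by
    have hs := sum_split_aux (fun e : Fin N × Fin N => (A e.1 e.2 : ℝ))
      (fun i j => by show ((A i j : ℝ)) = (A j i : ℝ); exact_mod_cast hAsymm i j)
      (fun i => by simp [hAdiag i])
    rw [← hE] at hs
    rw [hδ, div_mul_cancel₀ _ hcne, hs, hmdef]
  have hcard : 2 * (E.card : ℝ) = c := by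
    have hs := sum_split_aux (fun e : Fin N × Fin N => if e.1 = e.2 then (0 : ℝ) else 1)
      (fun i j => by simp [eq_comm]) (fun i => by simp)
    rw [← hE] at hs
    have hlhs : ∑ i : Fin N, ∑ j : Fin N, (if i = j then (0 : ℝ) else 1) = c := by
      have inner : ∀ i : Fin N, ∑ j : Fin N, (if i = j then (0 : ℝ) else 1) = (N : ℝ) - 1 := by
        intro i
        have hrw : ∀ j : Fin N, (if i = j then (0 : ℝ) else 1)
            = 1 - (if i = j then (1 : ℝ) else 0) := by
          intro j; by_cases h : i = j <;> simp [h]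
        rw [Finset.sum_congr rfl (fun j _ => hrw j), Finset.sum_sub_distrib,
          Finset.sum_const, Finset.sum_ite_eq]
        simp [Finset.card_univ]
      rw [Finset.sum_congr rfl (fun i _ => inner i), Finset.sum_const, Finset.card_univ]
      rw [hc, nsmul_eq_mul, Fintype.card_fin]
    have hrhs : ∑ e ∈ E, (if e.1 = e.2 then (0 : ℝ) else 1) = (E.card : ℝ) := by
      have hone : ∀ e ∈ E, (if e.1 = e.2 then (0 : ℝ) else 1) = 1 := by
        intro e he
        have hlt : e.1 < e.2 := (Finset.mem_filter.mp he).2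
        simp [ne_of_lt hlt]
      rw [Finset.sum_congr rfl hone, Finset.sum_const, nsmul_eq_mul, mul_one]
    rw [hlhs, hrhs] at hs
    linarith
  have hcard' : (E.card : ℝ) = c / 2 := by linarith
  have hm' : m = δ * c / 2 := by linarith
  -- the three sums
  have hsum1 : ∑ e ∈ E, p e = (E.card : ℝ) * α + m * (1 - β - α) := by
    rw [Finset.sum_congr rfl (fun e _ => show p e = α + (A e.1 e.2 : ℝ) * (1 - β - α) by
      rcases hA01 e.1 e.2 with h | h <;> simp [hp, h] <;> ring)]
    rw [Finset.sum_add_distrib, Finset.sum_const, ← Finset.sum_mul, nsmul_eq_mul, ← hmdef]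
  have hsum2 : ∑ e ∈ E, (p e * (1 - p e) + (1 - p e) * p e)
      = (E.card : ℝ) * (2 * (α * (1 - α)))
        + m * (2 * (β * (1 - β)) - 2 * (α * (1 - α))) := by
    rw [Finset.sum_congr rfl (fun e _ => show p e * (1 - p e) + (1 - p e) * p e
        = 2 * (α * (1 - α)) + (A e.1 e.2 : ℝ)
            * (2 * (β * (1 - β)) - 2 * (α * (1 - α))) by
      rcases hA01 e.1 e.2 with h | h <;> simp [hp, h] <;> ring)]
    rw [Finset.sum_add_distrib, Finset.sum_const, ← Finset.sum_mul, nsmul_eq_mul, ← hmdef]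
  have hsum3 : ∑ e ∈ E, (p e * ((1 - p e) * (1 - p e)) + (1 - p e) * (p e * (1 - p e))
        + (1 - p e) * ((1 - p e) * p e))
      = (E.card : ℝ) * (3 * (α * (1 - α) ^ 2))
        + m * (3 * (β ^ 2 * (1 - β)) - 3 * (α * (1 - α) ^ 2)) := by
    rw [Finset.sum_congr rfl (fun e _ => show p e * ((1 - p e) * (1 - p e))
          + (1 - p e) * (p e * (1 - p e)) + (1 - p e) * ((1 - p e) * p e)
        = 3 * (α * (1 - α) ^ 2) + (A e.1 e.2 : ℝ)
            * (3 * (β ^ 2 * (1 - β)) - 3 * (α * (1 - α) ^ 2)) by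
      rcases hA01 e.1 e.2 with h | h <;> simp [hp, h] <;> ring)]
    rw [Finset.sum_add_distrib, Finset.sum_const, ← Finset.sum_mul, nsmul_eq_mul, ← hmdef]
  refine ⟨?_, ?_, ?_⟩
  · -- û₁
    have : (∫ ω, (2 / c) * ∑ e ∈ E, (B 0 e.1 e.2 ω : ℝ) ∂μ)
        = (2 / c) * ∑ e ∈ E, (μ (S 0 e)).toReal := by
      simp only [hpt1]
      rw [integral_const_mul, master (fun e => S 0 e) (fun e => hSmeas 0 e)]
    rw [this, Finset.sum_congr rfl hv1, hsum1, hcard', hm']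
    field_simp
    ring
  · -- û₂
    have : (∫ ω, (1 / c) * ∑ e ∈ E, |(B 1 e.1 e.2 ω : ℝ) - (B 0 e.1 e.2 ω : ℝ)| ∂μ)
        = (1 / c) * ∑ e ∈ E, (μ (D2 e)).toReal := by
      simp only [hpt2]
      rw [integral_const_mul, master D2 hD2meas]
    rw [this, Finset.sum_congr rfl hv2, hsum2, hcard', hm']
    field_simp
    ring
  · -- û₃
    have : (∫ ω, (2 / (3 * (N : ℝ) * ((N : ℝ) - 1)))
          * ∑ e ∈ E, (if (B 2 e.1 e.2 ω = 1 ∧ B 1 e.1 e.2 ω ≠ 1 ∧ B 0 e.1 e.2 ω ≠ 1)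
              ∨ (B 2 e.1 e.2 ω ≠ 1 ∧ B 1 e.1 e.2 ω = 1 ∧ B 0 e.1 e.2 ω ≠ 1)
              ∨ (B 2 e.1 e.2 ω ≠ 1 ∧ B 1 e.1 e.2 ω ≠ 1 ∧ B 0 e.1 e.2 ω = 1)
            then (1 : ℝ) else 0) ∂μ)
        = (2 / (3 * (N : ℝ) * ((N : ℝ) - 1))) * ∑ e ∈ E, (μ (D3 e)).toReal := by
      simp only [hpt3]
      rw [integral_const_mul, master D3 hD3meas]
    rw [this, Finset.sum_congr rfl hv3, hsum3, hcard', hm']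
    have h3c : 3 * (N : ℝ) * ((N : ℝ) - 1) = 3 * c := by rw [hc]; ring
    rw [h3c]
    field_simp
    ring
end

section
/- For each n, consider a vertex i in a graph on N_n vertices with degree d_n observed under the noisy network model with error rates α_n, β_n ∈ [0,1] and i.i.d. Bernoulli(p_n) treatment, with p_n → 0, 0 < p_n < 1, and fixed bounded potential outcomes y(c_{11}), y(c_{10}), y(c_{01}), y(c_{00}). Then the per-vertex Aronow–Samii estimators in the noisy network satisfy: (i) if d_n p_n → ∞ and liminf β_n > 0 then E[ỹ_{A&S,i}(c_{10})] → y(c_{11}) and E[ỹ_{A&S,i}(c_{00})] → y(c_{01}); (ii) if d_n p_n → 0 then E[ỹ_{A&S,i}(c_{10})] → y(c_{10}) and E[ỹ_{A&S,i}(c_{00})] → y(c_{00}). In particular, the exact identities E[ỹ_{A&S,i}(c_{10})] = y(c_{10}) + (1 − (1−β_n p_n)^{d_n})(y(c_{11}) − y(c_{10})) and E[ỹ_{A&S,i}(c_{00})] = y(c_{00}) + (1 − (1−β_n p_n)^{d_n})(y(c_{01}) − y(c_{00})) hold for every n. -/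
open MeasureTheory ProbabilityTheory Filter

lemma AS_ind_int {Ωn : Type} [MeasurableSpace Ωn] {μ : Measure Ωn} [IsProbabilityMeasure μ]
    {U : Ωn → ℕ} (hU : Measurable U) (k : ℕ) (c : ℝ) :
    ∫ ω, (if U ω = k then c else 0) ∂μ = c * (μ {ω | U ω = k}).toReal := by
  have hs : MeasurableSet {ω | U ω = k} := hU (measurableSet_singleton k)
  have : (fun ω => if U ω = k then c else 0) = Set.indicator {ω | U ω = k} (fun _ => c) := by
    funext ω; by_cases h : U ω = k <;> simp [Set.indicator, h]
  rw [this, integral_indicator_const c hs]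
  simp [mul_comm, measureReal_def]

lemma AS_ind_integrable {Ωn : Type} [MeasurableSpace Ωn] {μ : Measure Ωn}
    [IsProbabilityMeasure μ] {U : Ωn → ℕ} (hU : Measurable U) (k : ℕ) (c : ℝ) :
    Integrable (fun ω => if U ω = k then c else 0) μ := by
  have hs : MeasurableSet {ω | U ω = k} := hU (measurableSet_singleton k)
  have : (fun ω => if U ω = k then c else 0) = Set.indicator {ω | U ω = k} (fun _ => c) := by
    funext ω; by_cases h : U ω = k <;> simp [Set.indicator, h]
  rw [this]
  exact (integrable_const c).indicator hs

lemma AS_exp_uni {Ωn : Type} [MeasurableSpace Ωn] {μ : Measure Ωn} [IsProbabilityMeasure μ]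
    {U : Ωn → ℕ} (hU : Measurable U) (hU01 : ∀ ω, U ω = 0 ∨ U ω = 1) (h : ℕ → ℝ) :
    ∫ ω, h (U ω) ∂μ = h 0 + (h 1 - h 0) * (μ {ω | U ω = 1}).toReal := by
  have e : ∀ ω, h (U ω) = h 0 + (if U ω = 1 then (h 1 - h 0 : ℝ) else 0) := by
    intro ω; rcases hU01 ω with h' | h' <;> simp [h']
  simp only [e]
  rw [integral_add (integrable_const _) (AS_ind_integrable hU 1 _), integral_const,
    AS_ind_int hU 1]
  simp

lemma AS_exp_biv {Ωn : Type} [MeasurableSpace Ωn] {μ : Measure Ωn} [IsProbabilityMeasure μ]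
    {U V : Ωn → ℕ} (hU : Measurable U) (hV : Measurable V)
    (hU01 : ∀ ω, U ω = 0 ∨ U ω = 1) (hV01 : ∀ ω, V ω = 0 ∨ V ω = 1)
    (hUV : IndepFun U V μ) (h : ℕ → ℕ → ℝ) :
    ∫ ω, h (U ω) (V ω) ∂μ
      = h 0 0 + (h 1 0 - h 0 0) * (μ {ω | U ω = 1}).toReal
        + (h 0 1 - h 0 0) * (μ {ω | V ω = 1}).toReal
        + (h 1 1 - h 1 0 - h 0 1 + h 0 0)
          * ((μ {ω | U ω = 1}).toReal * (μ {ω | V ω = 1}).toReal) := by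
  have e : ∀ ω, h (U ω) (V ω)
      = h 0 0 + (if U ω = 1 then (h 1 0 - h 0 0 : ℝ) else 0)
        + (if V ω = 1 then (h 0 1 - h 0 0 : ℝ) else 0)
        + (if U ω = 1 then (1:ℝ) else 0) * (if V ω = 1 then (1:ℝ) else 0)
          * (h 1 1 - h 1 0 - h 0 1 + h 0 0) := by
    intro ω; rcases hU01 ω with h1 | h1 <;> rcases hV01 ω with h2 | h2 <;>
      simp [h1, h2] <;> ring
  simp only [e]
  have hprod : IndepFun (fun ω => if U ω = 1 then (1:ℝ) else 0)
      (fun ω => if V ω = 1 then (1:ℝ) else 0) μ := by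
    have := hUV.comp (φ := fun n => if n = 1 then (1:ℝ) else 0)
      (ψ := fun n => if n = 1 then (1:ℝ) else 0) (measurable_from_nat (mα := inferInstance)) (measurable_from_nat (mα := inferInstance))
    exact this
  have hintUV : ∫ ω, (if U ω = 1 then (1:ℝ) else 0) * (if V ω = 1 then (1:ℝ) else 0) ∂μ
      = (μ {ω | U ω = 1}).toReal * (μ {ω | V ω = 1}).toReal := by
    have := hprod.integral_mul_eq_mul_integral
      (AS_ind_integrable hU 1 (1:ℝ)).aestronglyMeasurable
      (AS_ind_integrable hV 1 (1:ℝ)).aestronglyMeasurable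
    have e2 : ∫ ω, (if U ω = 1 then (1:ℝ) else 0) * (if V ω = 1 then (1:ℝ) else 0) ∂μ
        = ∫ ω, ((fun ω => if U ω = 1 then (1:ℝ) else 0) * fun ω => if V ω = 1 then (1:ℝ) else 0) ω ∂μ := rfl
    rw [e2, this, AS_ind_int hU 1, AS_ind_int hV 1]; ring
  have hintprod : Integrable
      (fun ω => (if U ω = 1 then (1:ℝ) else 0) * (if V ω = 1 then (1:ℝ) else 0)) μ := by
    apply Integrable.mono' (integrable_const (1:ℝ))
    · exact (((measurable_of_countable (fun n : ℕ => if n = 1 then (1:ℝ) else 0)).comp hU).mul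
        ((measurable_of_countable (fun n : ℕ => if n = 1 then (1:ℝ) else 0)).comp hV)).aestronglyMeasurable
    · filter_upwards with ω
      by_cases h1 : U ω = 1 <;> by_cases h2 : V ω = 1 <;> simp [h1, h2]
  rw [integral_add, integral_add, integral_add (integrable_const _)]
  · rw [integral_const, AS_ind_int hU 1, AS_ind_int hV 1, integral_mul_const, hintUV]
    simp; ring
  · exact AS_ind_integrable hU 1 _
  · exact (integrable_const _).add (AS_ind_integrable hU 1 _)
  · exact AS_ind_integrable hV 1 _
  · exact ((integrable_const _).add (AS_ind_integrable hU 1 _)).add (AS_ind_integrable hV 1 _)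
  · exact hintprod.mul_const _


noncomputable def AS_F0 (zval : ℕ) (c0 : ℝ) : ℕ → ℝ := fun z => if z = zval then c0 else 0
noncomputable def AS_H1 (P : ℝ) : ℕ → ℕ → ℝ :=
  fun z a => (if a = 1 ∧ z = 1 then 0 else 1) * ((1 - P) ^ a)⁻¹
noncomputable def AS_H2 (P : ℝ) (avj : ℕ) : ℕ → ℕ → ℝ :=
  fun z a => AS_H1 P z a * (if avj = 1 ∧ z = 1 then 0 else 1)

-- bounds
lemma AS_H1_bound {P : ℝ} (hP0 : 0 < P) (hP1 : P < 1) {z a : ℕ} (ha : a = 0 ∨ a = 1) :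
    |AS_H1 P z a| ≤ (1 - P)⁻¹ := by
  have h0 : (0:ℝ) < 1 - P := by linarith
  have h2 : (1:ℝ) ≤ (1 - P)⁻¹ := by
    exact (one_le_inv₀ h0).2 (by linarith)
  rcases ha with rfl | rfl <;> by_cases hz : z = 1 <;>
    simp [AS_H1, hz, abs_of_nonneg, inv_nonneg, h0.le] <;>
    first
      | linarith
      | (rw [abs_of_nonneg (by positivity)])
lemma AS_H2_bound {P : ℝ} (hP0 : 0 < P) (hP1 : P < 1) (avj : ℕ) {z a : ℕ} (ha : a = 0 ∨ a = 1) :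
    |AS_H2 P avj z a| ≤ (1 - P)⁻¹ := by
  have h0 : (0:ℝ) < 1 - P := by linarith
  rw [AS_H2, abs_mul]
  calc |AS_H1 P z a| * |if avj = 1 ∧ z = 1 then (0:ℝ) else 1|
      ≤ (1 - P)⁻¹ * 1 := by
        apply mul_le_mul (AS_H1_bound hP0 hP1 ha) ?_ (abs_nonneg _) (inv_nonneg.mpr h0.le)
        by_cases h : avj = 1 ∧ z = 1 <;> simp [h]
    _ = (1 - P)⁻¹ := mul_one _

section
variable {Ωn : Type} [MeasurableSpace Ωn] {μ : Measure Ωn} [IsProbabilityMeasure μ]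
  {U V : Ωn → ℕ}

lemma AS_int_H1 (hU : Measurable U) (hV : Measurable V)
    (hU01 : ∀ ω, U ω = 0 ∨ U ω = 1) (hV01 : ∀ ω, V ω = 0 ∨ V ω = 1)
    (hUV : IndepFun U V μ) {P : ℝ} (hP0 : 0 < P) (hP1 : P < 1)
    (hrU : (μ {ω | U ω = 1}).toReal = P) :
    ∫ ω, AS_H1 P (U ω) (V ω) ∂μ = 1 := by
  rw [AS_exp_biv hU hV hU01 hV01 hUV, hrU]
  have h0 : (1:ℝ) - P ≠ 0 := by intro h; linarith
  simp only [AS_H1]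
  norm_num
  field_simp
  ring

lemma AS_int_H2 (hU : Measurable U) (hV : Measurable V)
    (hU01 : ∀ ω, U ω = 0 ∨ U ω = 1) (hV01 : ∀ ω, V ω = 0 ∨ V ω = 1)
    (hUV : IndepFun U V μ) {P b : ℝ} (hP0 : 0 < P) (hP1 : P < 1)
    (hrU : (μ {ω | U ω = 1}).toReal = P) (avj : ℕ)
    (hcase : avj = 0 ∨ (avj = 1 ∧ (μ {ω | V ω = 1}).toReal = 1 - b)) :
    ∫ ω, AS_H2 P avj (U ω) (V ω) ∂μ = (1 - b * P) ^ avj := by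
  have h0 : (1:ℝ) - P ≠ 0 := by intro h; linarith
  rcases hcase with h | ⟨h, hrV⟩
  · subst h
    have e : ∀ z a, AS_H2 P 0 z a = AS_H1 P z a := by
      intro z a; simp [AS_H2]
    rw [pow_zero, ← AS_int_H1 hU hV hU01 hV01 hUV hP0 hP1 hrU]
    exact integral_congr_ae (Filter.Eventually.of_forall (fun ω => e _ _))
  · subst h
    rw [AS_exp_biv hU hV hU01 hV01 hUV, hrU, hrV]
    simp only [AS_H2, AS_H1]
    norm_num
    field_simp
    ring
end


lemma AS_workhorse {Ωn : Type} [MeasurableSpace Ωn] {μ : Measure Ωn} [IsProbabilityMeasure μ]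
    {ι : Type} [DecidableEq ι] {X : ι → Ωn → ℕ} (hXm : ∀ i, Measurable (X i))
    (hind : iIndepFun X μ)
    (i0 : ι) (F0 : ℕ → ℝ) {κ : Type} [DecidableEq κ] (J : Finset κ)
    (c1 c2 : κ → ι) (h : κ → ℕ → ℕ → ℝ)
    (hne : ∀ j ∈ J, ∀ j' ∈ J, c1 j ≠ c2 j')
    (h1inj : ∀ j ∈ J, ∀ j' ∈ J, c1 j = c1 j' → j = j')
    (h2inj : ∀ j ∈ J, ∀ j' ∈ J, c2 j = c2 j' → j = j')
    (hi0 : ∀ j ∈ J, i0 ≠ c1 j ∧ i0 ≠ c2 j) :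
    ∫ ω, F0 (X i0 ω) * ∏ j ∈ J, h j (X (c1 j) ω) (X (c2 j) ω) ∂μ
      = (∫ ω, F0 (X i0 ω) ∂μ) * ∏ j ∈ J, ∫ ω, h j (X (c1 j) ω) (X (c2 j) ω) ∂μ := by
  classical
  induction J using Finset.cons_induction with
  | empty => simp
  | cons a s ha IH =>
    have hmem : ∀ j ∈ s, j ∈ Finset.cons a s ha := fun j hj => Finset.mem_cons_of_mem hj
    have hamem : a ∈ Finset.cons a s ha := Finset.mem_cons_self a s
    -- the two finsets of coordinates
    set S : Finset ι := insert i0 (s.image c1 ∪ s.image c2) with hS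
    set T : Finset ι := {c1 a, c2 a} with hT
    have hST : Disjoint S T := by
      rw [Finset.disjoint_right]
      intro x hxT hxS
      simp only [hT, Finset.mem_insert, Finset.mem_singleton] at hxT
      simp only [hS, Finset.mem_insert, Finset.mem_union, Finset.mem_image] at hxS
      rcases hxT with rfl | rfl
      · rcases hxS with h1 | ⟨j, hj, hj2⟩ | ⟨j, hj, hj2⟩
        · exact (hi0 a hamem).1 h1.symm
        · exact ha (h1inj a hamem j (hmem j hj) hj2.symm ▸ hj)
        · exact hne a hamem j (hmem j hj) hj2.symm
      · rcases hxS with h1 | ⟨j, hj, hj2⟩ | ⟨j, hj, hj2⟩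
        · exact (hi0 a hamem).2 h1.symm
        · exact hne j (hmem j hj) a hamem hj2
        · exact ha (h2inj a hamem j (hmem j hj) hj2.symm ▸ hj)
    have hIndST := hind.indepFun_finset S T hST hXm
    -- Φ and Ψ
    have hi0S : i0 ∈ S := Finset.mem_insert_self _ _
    have hc1S : ∀ j ∈ s, c1 j ∈ S := fun j hj =>
      Finset.mem_insert_of_mem (Finset.mem_union_left _ (Finset.mem_image_of_mem _ hj))
    have hc2S : ∀ j ∈ s, c2 j ∈ S := fun j hj =>
      Finset.mem_insert_of_mem (Finset.mem_union_right _ (Finset.mem_image_of_mem _ hj))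
    have hc1T : c1 a ∈ T := Finset.mem_insert_self _ _
    have hc2T : c2 a ∈ T := Finset.mem_insert_of_mem (Finset.mem_singleton_self _)
    set Φ : ({x // x ∈ S} → ℕ) → ℝ := fun x =>
      F0 (x ⟨i0, hi0S⟩) * ∏ j ∈ s.attach, h j (x ⟨c1 j, hc1S j j.2⟩) (x ⟨c2 j, hc2S j j.2⟩)
      with hΦ
    set Ψ : ({x // x ∈ T} → ℕ) → ℝ := fun x => h a (x ⟨c1 a, hc1T⟩) (x ⟨c2 a, hc2T⟩) with hΨ
    have hΦm : Measurable Φ := by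
      apply Measurable.mul
      · exact (measurable_of_countable F0).comp (measurable_pi_apply _)
      · apply Finset.measurable_prod
        intro j _
        exact (measurable_of_countable (fun q : ℕ × ℕ => h j q.1 q.2)).comp
          (Measurable.prodMk (measurable_pi_apply (⟨c1 j, hc1S j j.2⟩ : {x // x ∈ S}))
            (measurable_pi_apply (⟨c2 j, hc2S j j.2⟩ : {x // x ∈ S})))
    have hΨm : Measurable Ψ :=
      (measurable_of_countable (fun q : ℕ × ℕ => h a q.1 q.2)).comp
        (Measurable.prodMk (measurable_pi_apply (⟨c1 a, hc1T⟩ : {x // x ∈ T}))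
          (measurable_pi_apply (⟨c2 a, hc2T⟩ : {x // x ∈ T})))
    have hIndep : IndepFun (fun ω => F0 (X i0 ω) * ∏ j ∈ s, h j (X (c1 j) ω) (X (c2 j) ω))
        (fun ω => h a (X (c1 a) ω) (X (c2 a) ω)) μ := by
      have := hIndST.comp hΦm hΨm
      convert this using 2 with ω
      · simp only [Φ, Function.comp]
        congr 1
        rw [← Finset.prod_attach s (fun j => h j (X (c1 j) ω) (X (c2 j) ω))]
      · rfl
    have hmeasL : AEStronglyMeasurable
        (fun ω => F0 (X i0 ω) * ∏ j ∈ s, h j (X (c1 j) ω) (X (c2 j) ω)) μ := by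
      apply Measurable.aestronglyMeasurable
      apply Measurable.mul
      · exact (measurable_of_countable F0).comp (hXm i0)
      · exact Finset.measurable_prod _ fun j _ =>
          (measurable_of_countable (fun q : ℕ × ℕ => h j q.1 q.2)).comp
            ((hXm _).prodMk (hXm _))
    have hmeasR : AEStronglyMeasurable (fun ω => h a (X (c1 a) ω) (X (c2 a) ω)) μ :=
      ((measurable_of_countable (fun q : ℕ × ℕ => h a q.1 q.2)).comp
        ((hXm _).prodMk (hXm _))).aestronglyMeasurable
    have key := hIndep.integral_mul_eq_mul_integral hmeasL hmeasR
    have e1 : ∀ ω, F0 (X i0 ω) * ∏ j ∈ Finset.cons a s ha, h j (X (c1 j) ω) (X (c2 j) ω)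
        = (F0 (X i0 ω) * ∏ j ∈ s, h j (X (c1 j) ω) (X (c2 j) ω)) *
          h a (X (c1 a) ω) (X (c2 a) ω) := by
      intro ω; rw [Finset.prod_cons]; ring
    simp only [e1]
    have : (fun ω => (F0 (X i0 ω) * ∏ j ∈ s, h j (X (c1 j) ω) (X (c2 j) ω)) *
          h a (X (c1 a) ω) (X (c2 a) ω)) =
        (fun ω => F0 (X i0 ω) * ∏ j ∈ s, h j (X (c1 j) ω) (X (c2 j) ω)) *
        (fun ω => h a (X (c1 a) ω) (X (c2 a) ω)) := rfl
    rw [this, key, IH (fun j hj j' hj' => hne j (hmem j hj) j' (hmem j' hj'))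
      (fun j hj j' hj' => h1inj j (hmem j hj) j' (hmem j' hj'))
      (fun j hj j' hj' => h2inj j (hmem j hj) j' (hmem j' hj')) (fun j hj => hi0 j (hmem j hj))]
    · rw [Finset.prod_cons]; ring

lemma AS_key {Ωn : Type} [MeasurableSpace Ωn] {μ : Measure Ωn} [IsProbabilityMeasure μ]
    {Nn : ℕ} (v : Fin Nn) (Av : Fin Nn → ℕ) (hAvv : Av v = 0)
    (hAv01 : ∀ j, Av j = 0 ∨ Av j = 1)
    {P b : ℝ} (hP0 : 0 < P) (hP1 : P < 1) (hb1 : b ≤ 1)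
    {ι : Type} [DecidableEq ι] {X : ι → Ωn → ℕ} (hXm : ∀ i, Measurable (X i))
    (hX01 : ∀ i ω, X i ω = 0 ∨ X i ω = 1)
    (hind : iIndepFun X μ)
    (i0 : ι) (c1 c2 : Fin Nn → ι)
    (ZZ AT : Fin Nn → Ωn → ℕ)
    (hZZ : ∀ j ω, ZZ j ω = X (c1 j) ω)
    (hZv : ∀ ω, ZZ v ω = X i0 ω)
    (hAT : ∀ j, j ≠ v → ∀ ω, AT j ω = X (c2 j) ω)
    (hATv : ∀ ω, AT v ω = 0)
    (hi0c1 : ∀ j, j ≠ v → i0 ≠ c1 j) (hi0c2 : ∀ j, j ≠ v → i0 ≠ c2 j)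
    (hc1c2 : ∀ j j', j ≠ v → j' ≠ v → c1 j ≠ c2 j')
    (hc1inj : ∀ j j', j ≠ v → j' ≠ v → c1 j = c1 j' → j = j')
    (hc2inj : ∀ j j', j ≠ v → j' ≠ v → c2 j = c2 j' → j = j')
    (hZprob : ∀ j, μ {ω | ZZ j ω = 1} = ENNReal.ofReal P)
    (hATprob : ∀ j, j ≠ v → Av j = 1 → μ {ω | AT j ω = 1} = ENNReal.ofReal (1 - b))
    (zval : ℕ) (c0 : ℝ)
    (hnorm : ∫ ω, (if ZZ v ω = zval then c0 else 0) ∂μ = 1)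
    (ya yb : ℝ) :
    ∫ ω, ((if ZZ v ω = zval ∧ (∑ j, ZZ j ω * AT j ω) = 0 then (1:ℝ) else 0)
      * (c0 * ((1 - P) ^ (∑ j, AT j ω))⁻¹)
      * (if 0 < ∑ j, ZZ j ω * Av j then ya else yb)) ∂μ
    = ya + (yb - ya) * (1 - b * P) ^ (∑ j, Av j) := by
  classical
  have h1P : (0:ℝ) < 1 - P := by linarith
  set s : Finset (Fin Nn) := Finset.univ.erase v with hs
  have hsne : ∀ j ∈ s, j ≠ v := fun j hj => Finset.ne_of_mem_erase hj
  have hZ01 : ∀ j ω, ZZ j ω = 0 ∨ ZZ j ω = 1 := fun j ω => hZZ j ω ▸ hX01 (c1 j) ω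
  have hAT01 : ∀ j ω, AT j ω = 0 ∨ AT j ω = 1 := by
    intro j ω
    by_cases hj : j = v
    · subst hj; exact Or.inl (hATv ω)
    · rw [hAT j hj ω]; exact hX01 (c2 j) ω
  -- pointwise identity
  have claim : ∀ ω,
      ((if ZZ v ω = zval ∧ (∑ j, ZZ j ω * AT j ω) = 0 then (1:ℝ) else 0)
        * (c0 * ((1 - P) ^ (∑ j, AT j ω))⁻¹)
        * (if 0 < ∑ j, ZZ j ω * Av j then ya else yb))
      = ya * (AS_F0 zval c0 (X i0 ω) * ∏ j ∈ s, AS_H1 P (X (c1 j) ω) (X (c2 j) ω))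
        + (yb - ya) * (AS_F0 zval c0 (X i0 ω)
            * ∏ j ∈ s, AS_H2 P (Av j) (X (c1 j) ω) (X (c2 j) ω)) := by
    intro ω
    have hF0 : AS_F0 zval c0 (X i0 ω) = if ZZ v ω = zval then c0 else 0 := by
      rw [AS_F0, ← hZv ω]
    by_cases hzv : ZZ v ω = zval
    · have hprod1 : ∀ j ∈ s, AS_H1 P (X (c1 j) ω) (X (c2 j) ω)
          = (if AT j ω = 1 ∧ ZZ j ω = 1 then (0:ℝ) else 1) * ((1 - P) ^ (AT j ω))⁻¹ := by
        intro j hj; rw [AS_H1, ← hZZ j ω, ← hAT j (hsne j hj) ω]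
      have hprod2 : ∀ j ∈ s, AS_H2 P (Av j) (X (c1 j) ω) (X (c2 j) ω)
          = ((if AT j ω = 1 ∧ ZZ j ω = 1 then (0:ℝ) else 1) * ((1 - P) ^ (AT j ω))⁻¹)
            * (if Av j = 1 ∧ ZZ j ω = 1 then (0:ℝ) else 1) := by
        intro j hj; rw [AS_H2, AS_H1, ← hZZ j ω, ← hAT j (hsne j hj) ω]
      rw [Finset.prod_congr rfl hprod1, Finset.prod_congr rfl hprod2, hF0, if_pos hzv]
      simp only [Finset.prod_mul_distrib]
      have hpow : ∏ j ∈ s, ((1 - P) ^ (AT j ω))⁻¹ = ((1 - P) ^ (∑ j, AT j ω))⁻¹ := by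
        rw [Finset.prod_inv_distrib, Finset.prod_pow_eq_pow_sum,
          Finset.sum_erase (f := fun j => AT j ω) Finset.univ (hATv ω)]
      have hindSt : (∏ j ∈ s, (if AT j ω = 1 ∧ ZZ j ω = 1 then (0:ℝ) else 1))
          = if (∑ j, ZZ j ω * AT j ω) = 0 then 1 else 0 := by
        by_cases hSt : (∑ j, ZZ j ω * AT j ω) = 0
        · rw [if_pos hSt]
          apply Finset.prod_eq_one
          intro j hj
          have h0 : ZZ j ω * AT j ω = 0 :=
            (Finset.sum_eq_zero_iff.mp hSt) j (Finset.mem_univ j)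
          rw [if_neg]
          rintro ⟨ha, hz⟩
          rw [ha, hz] at h0
          simp at h0
        · rw [if_neg hSt]
          obtain ⟨j, -, hj⟩ : ∃ j ∈ Finset.univ, ZZ j ω * AT j ω ≠ 0 := by
            by_contra hcon
            push_neg at hcon
            exact hSt (Finset.sum_eq_zero fun j hj => hcon j hj)
          have hjv : j ≠ v := by
            rintro rfl
            rw [hATv ω, mul_zero] at hj
            exact hj rfl
          refine Finset.prod_eq_zero (Finset.mem_erase.mpr ⟨hjv, Finset.mem_univ j⟩) ?_
          have hz1 : ZZ j ω = 1 := by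
            rcases hZ01 j ω with h | h
            · rw [h, zero_mul] at hj; exact absurd rfl hj
            · exact h
          have ha1 : AT j ω = 1 := by
            rcases hAT01 j ω with h | h
            · rw [h, mul_zero] at hj; exact absurd rfl hj
            · exact h
          rw [if_pos ⟨ha1, hz1⟩]
      have hindSA : (∏ j ∈ s, (if Av j = 1 ∧ ZZ j ω = 1 then (0:ℝ) else 1))
          = if (∑ j, ZZ j ω * Av j) = 0 then 1 else 0 := by
        by_cases hSA : (∑ j, ZZ j ω * Av j) = 0
        · rw [if_pos hSA]
          apply Finset.prod_eq_one
          intro j hj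
          have h0 : ZZ j ω * Av j = 0 :=
            (Finset.sum_eq_zero_iff.mp hSA) j (Finset.mem_univ j)
          rw [if_neg]
          rintro ⟨ha, hz⟩
          rw [ha, hz] at h0
          simp at h0
        · rw [if_neg hSA]
          obtain ⟨j, -, hj⟩ : ∃ j ∈ Finset.univ, ZZ j ω * Av j ≠ 0 := by
            by_contra hcon
            push_neg at hcon
            exact hSA (Finset.sum_eq_zero fun j hj => hcon j hj)
          have hjv : j ≠ v := by
            rintro rfl
            rw [hAvv, mul_zero] at hj
            exact hj rfl
          refine Finset.prod_eq_zero (Finset.mem_erase.mpr ⟨hjv, Finset.mem_univ j⟩) ?_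
          have hz1 : ZZ j ω = 1 := by
            rcases hZ01 j ω with h | h
            · rw [h, zero_mul] at hj; exact absurd rfl hj
            · exact h
          have ha1 : Av j = 1 := by
            rcases hAv01 j with h | h
            · rw [h, mul_zero] at hj; exact absurd rfl hj
            · exact h
          rw [if_pos ⟨ha1, hz1⟩]
      rw [hpow, hindSt, hindSA]
      simp only [hzv, eq_self_iff_true, true_and]
      by_cases hSt : (∑ j, ZZ j ω * AT j ω) = 0 <;>
        by_cases hSA : (∑ j, ZZ j ω * Av j) = 0
      · rw [if_pos hSt, if_pos hSA, if_neg (by omega : ¬ 0 < ∑ j : Fin Nn, ZZ j ω * Av j)]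
        ring
      · rw [if_pos hSt, if_neg hSA, if_pos (Nat.pos_of_ne_zero hSA)]
        ring
      · rw [if_neg hSt, if_pos hSA, if_neg (by omega : ¬ 0 < ∑ j : Fin Nn, ZZ j ω * Av j)]
        ring
      · rw [if_neg hSt, if_neg hSA, if_pos (Nat.pos_of_ne_zero hSA)]
        ring
    · rw [hF0, if_neg hzv, if_neg (fun h => hzv h.1)]
      ring
  -- measurability and integrability
  have hFFm : Measurable (fun ω =>
      AS_F0 zval c0 (X i0 ω) * ∏ j ∈ s, AS_H1 P (X (c1 j) ω) (X (c2 j) ω)) := by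
    apply Measurable.mul
    · exact (measurable_of_countable (AS_F0 zval c0)).comp (hXm i0)
    · exact Finset.measurable_prod _ fun j _ =>
        (measurable_of_countable (fun q : ℕ × ℕ => AS_H1 P q.1 q.2)).comp
          ((hXm _).prodMk (hXm _))
  have hGGm : Measurable (fun ω =>
      AS_F0 zval c0 (X i0 ω) * ∏ j ∈ s, AS_H2 P (Av j) (X (c1 j) ω) (X (c2 j) ω)) := by
    apply Measurable.mul
    · exact (measurable_of_countable (AS_F0 zval c0)).comp (hXm i0)
    · exact Finset.measurable_prod _ fun j _ =>
        (measurable_of_countable (fun q : ℕ × ℕ => AS_H2 P (Av j) q.1 q.2)).comp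
          ((hXm _).prodMk (hXm _))
  have hF0bound : ∀ ω, |AS_F0 zval c0 (X i0 ω)| ≤ |c0| := by
    intro ω; rw [AS_F0]
    by_cases h : X i0 ω = zval <;> simp [h]
  have hFFint : Integrable (fun ω =>
      AS_F0 zval c0 (X i0 ω) * ∏ j ∈ s, AS_H1 P (X (c1 j) ω) (X (c2 j) ω)) μ := by
    apply Integrable.mono' (integrable_const (|c0| * ((1 - P)⁻¹) ^ s.card))
      hFFm.aestronglyMeasurable
    filter_upwards with ω
    rw [Real.norm_eq_abs, abs_mul, Finset.abs_prod]
    apply mul_le_mul (hF0bound ω) ?_ (Finset.prod_nonneg fun j _ => abs_nonneg _) (abs_nonneg _)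
    rw [← Finset.prod_const]
    exact Finset.prod_le_prod (fun j _ => abs_nonneg _)
      (fun j _ => AS_H1_bound hP0 hP1 (hX01 (c2 j) ω))
  have hGGint : Integrable (fun ω =>
      AS_F0 zval c0 (X i0 ω) * ∏ j ∈ s, AS_H2 P (Av j) (X (c1 j) ω) (X (c2 j) ω)) μ := by
    apply Integrable.mono' (integrable_const (|c0| * ((1 - P)⁻¹) ^ s.card))
      hGGm.aestronglyMeasurable
    filter_upwards with ω
    rw [Real.norm_eq_abs, abs_mul, Finset.abs_prod]
    apply mul_le_mul (hF0bound ω) ?_ (Finset.prod_nonneg fun j _ => abs_nonneg _) (abs_nonneg _)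
    rw [← Finset.prod_const]
    exact Finset.prod_le_prod (fun j _ => abs_nonneg _)
      (fun j _ => AS_H2_bound hP0 hP1 (Av j) (hX01 (c2 j) ω))
  -- split the integral
  rw [integral_congr_ae (Filter.Eventually.of_forall claim), integral_add
    (hFFint.const_mul ya) (hGGint.const_mul (yb - ya)), integral_const_mul, integral_const_mul]
  -- evaluate the two integrals via the workhorse
  have hF0int : ∫ ω, AS_F0 zval c0 (X i0 ω) ∂μ = 1 := by
    rw [← hnorm]
    apply integral_congr_ae
    filter_upwards with ω
    rw [AS_F0, ← hZv ω]
  have hwork1 := AS_workhorse hXm hind i0 (AS_F0 zval c0) s c1 c2 (fun _ => AS_H1 P)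
    (fun j hj j' hj' => hc1c2 j j' (hsne j hj) (hsne j' hj'))
    (fun j hj j' hj' => hc1inj j j' (hsne j hj) (hsne j' hj'))
    (fun j hj j' hj' => hc2inj j j' (hsne j hj) (hsne j' hj'))
    (fun j hj => ⟨hi0c1 j (hsne j hj), hi0c2 j (hsne j hj)⟩)
  have hwork2 := AS_workhorse hXm hind i0 (AS_F0 zval c0) s c1 c2 (fun j => AS_H2 P (Av j))
    (fun j hj j' hj' => hc1c2 j j' (hsne j hj) (hsne j' hj'))
    (fun j hj j' hj' => hc1inj j j' (hsne j hj) (hsne j' hj'))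
    (fun j hj j' hj' => hc2inj j j' (hsne j hj) (hsne j' hj'))
    (fun j hj => ⟨hi0c1 j (hsne j hj), hi0c2 j (hsne j hj)⟩)
  rw [hwork1, hwork2, hF0int]
  -- per-factor values
  have hrU : ∀ j, (μ {ω | X (c1 j) ω = 1}).toReal = P := by
    intro j
    have : {ω | X (c1 j) ω = 1} = {ω | ZZ j ω = 1} := by
      ext ω; simp [hZZ j ω]
    rw [this, hZprob j, ENNReal.toReal_ofReal hP0.le]
  have hfac1 : ∀ j ∈ s, ∫ ω, AS_H1 P (X (c1 j) ω) (X (c2 j) ω) ∂μ = 1 := by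
    intro j hj
    exact AS_int_H1 (hXm _) (hXm _) (hX01 _) (hX01 _)
      (hind.indepFun (hc1c2 j j (hsne j hj) (hsne j hj))) hP0 hP1 (hrU j)
  have hfac2 : ∀ j ∈ s, ∫ ω, AS_H2 P (Av j) (X (c1 j) ω) (X (c2 j) ω) ∂μ
      = (1 - b * P) ^ (Av j) := by
    intro j hj
    apply AS_int_H2 (hXm _) (hXm _) (hX01 _) (hX01 _)
      (hind.indepFun (hc1c2 j j (hsne j hj) (hsne j hj))) hP0 hP1 (hrU j)
    rcases hAv01 j with h | h
    · exact Or.inl h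
    · refine Or.inr ⟨h, ?_⟩
      have hset : {ω | X (c2 j) ω = 1} = {ω | AT j ω = 1} := by
        ext ω; simp [hAT j (hsne j hj) ω]
      rw [hset, hATprob j (hsne j hj) h, ENNReal.toReal_ofReal (by linarith)]
  rw [Finset.prod_congr rfl hfac1, Finset.prod_congr rfl hfac2, Finset.prod_const_one]
  have : ∏ j ∈ s, (1 - b * P) ^ (Av j) = (1 - b * P) ^ (∑ j, Av j) := by
    rw [Finset.prod_pow_eq_pow_sum, Finset.sum_erase (f := fun j => Av j) Finset.univ hAvv]
  rw [this]
  ring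

lemma AS_t_lim_one (β p : ℕ → ℝ) (d : ℕ → ℕ)
    (hβ01 : ∀ n, 0 ≤ β n ∧ β n ≤ 1) (hp01 : ∀ n, 0 < p n ∧ p n < 1)
    (hdp : Tendsto (fun n => (d n : ℝ) * p n) atTop (nhds 0)) :
    Tendsto (fun n => (1 - β n * p n) ^ (d n)) atTop (nhds 1) := by
  have hbp0 : ∀ n, 0 ≤ β n * p n := fun n => mul_nonneg (hβ01 n).1 (hp01 n).1.le
  have hbp1 : ∀ n, β n * p n ≤ 1 := fun n =>
    mul_le_one₀ (hβ01 n).2 (hp01 n).1.le (hp01 n).2.le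
  have hupper : ∀ n, (1 - β n * p n) ^ (d n) ≤ 1 := fun n =>
    pow_le_one₀ (by linarith [hbp1 n]) (by linarith [hbp0 n])
  have hlower : ∀ n, 1 - (d n : ℝ) * p n ≤ (1 - β n * p n) ^ (d n) := by
    intro n
    have h1 : 1 + (d n : ℝ) * (-(β n * p n)) ≤ (1 + -(β n * p n)) ^ (d n) :=
      one_add_mul_le_pow (by linarith [hbp1 n]) (d n)
    have h2 : 1 - (d n : ℝ) * p n ≤ 1 + (d n : ℝ) * (-(β n * p n)) := by
      have : β n * p n ≤ p n := mul_le_of_le_one_left (hp01 n).1.le (hβ01 n).2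
      have hd0 : (0:ℝ) ≤ (d n : ℝ) := Nat.cast_nonneg _
      nlinarith
    calc 1 - (d n : ℝ) * p n ≤ 1 + (d n : ℝ) * (-(β n * p n)) := h2
      _ ≤ (1 + -(β n * p n)) ^ (d n) := h1
      _ = (1 - β n * p n) ^ (d n) := by ring_nf
  have hlo : Tendsto (fun n => 1 - (d n : ℝ) * p n) atTop (nhds 1) := by
    have := hdp.const_sub 1
    simpa using this
  exact tendsto_of_tendsto_of_tendsto_of_le_of_le hlo tendsto_const_nhds hlower hupper

lemma AS_t_lim_zero (β p : ℕ → ℝ) (d : ℕ → ℕ)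
    (hβ01 : ∀ n, 0 ≤ β n ∧ β n ≤ 1) (hp01 : ∀ n, 0 < p n ∧ p n < 1)
    (hdp : Tendsto (fun n => (d n : ℝ) * p n) atTop atTop)
    (hlb : 0 < Filter.liminf β atTop) :
    Tendsto (fun n => (1 - β n * p n) ^ (d n)) atTop (nhds 0) := by
  have hbp0 : ∀ n, 0 ≤ β n * p n := fun n => mul_nonneg (hβ01 n).1 (hp01 n).1.le
  have hbp1 : ∀ n, β n * p n ≤ 1 := fun n =>
    mul_le_one₀ (hβ01 n).2 (hp01 n).1.le (hp01 n).2.le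
  have hln : ∀ n, (0:ℝ) ≤ (1 - β n * p n) ^ (d n) := fun n =>
    pow_nonneg (by linarith [hbp1 n]) _
  have hub : ∀ n, (1 - β n * p n) ^ (d n) ≤ Real.exp (-(β n * p n * d n)) := by
    intro n
    have h1 : 1 - β n * p n ≤ Real.exp (-(β n * p n)) := by
      have := Real.add_one_le_exp (-(β n * p n))
      linarith
    calc (1 - β n * p n) ^ (d n) ≤ (Real.exp (-(β n * p n))) ^ (d n) :=
          pow_le_pow_left₀ (by linarith [hbp1 n]) h1 (d n)
      _ = Real.exp (-(β n * p n) * d n) := by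
          rw [← Real.exp_nat_mul]; ring_nf
      _ = Real.exp (-(β n * p n * d n)) := by ring_nf
  -- exponent tends to infinity
  set b := Filter.liminf β atTop / 2 with hbdef
  have hb0 : 0 < b := by positivity
  have hblt : b < Filter.liminf β atTop := by
    rw [hbdef]; linarith
  have hev : ∀ᶠ n in atTop, b < β n :=
    Filter.eventually_lt_of_lt_liminf hblt
      (Filter.isBoundedUnder_of ⟨0, fun n => (hβ01 n).1⟩)
  have hexp : Tendsto (fun n => β n * p n * d n) atTop atTop := by
    apply Filter.tendsto_atTop_mono' atTop (f₁ := fun n => b * ((d n : ℝ) * p n))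
    · filter_upwards [hev] with n hn
      have hd0 : (0:ℝ) ≤ (d n : ℝ) * p n := mul_nonneg (Nat.cast_nonneg _) (hp01 n).1.le
      calc b * ((d n : ℝ) * p n) ≤ β n * ((d n : ℝ) * p n) :=
            mul_le_mul_of_nonneg_right hn.le hd0
        _ = β n * p n * d n := by ring
    · exact Filter.Tendsto.const_mul_atTop hb0 hdp
  have hexp0 : Tendsto (fun n => Real.exp (-(β n * p n * d n))) atTop (nhds 0) :=
    Real.tendsto_exp_atBot.comp (Filter.tendsto_neg_atTop_atBot.comp hexp)
  exact tendsto_of_tendsto_of_tendsto_of_le_of_le tendsto_const_nhds hexp0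
    (fun n => hln n) (fun n => hub n)

lemma AS_per_n
    {Ωn : Type} [MeasurableSpace Ωn] {μ : Measure Ωn} [IsProbabilityMeasure μ]
    {Nn : ℕ} (A : Fin Nn → Fin Nn → ℕ)
    (hAsymm : ∀ i j, A i j = A j i) (hAdiag : ∀ i, A i i = 0)
    (hA01 : ∀ i j, A i j = 0 ∨ A i j = 1)
    {β P : ℝ} (hβ01 : 0 ≤ β ∧ β ≤ 1) (hp0 : 0 < P) (hp1 : P < 1)
    (Z : Fin Nn → Ωn → ℕ) (hZmeas : ∀ i, Measurable (Z i))
    (hZ01 : ∀ i ω, Z i ω = 0 ∨ Z i ω = 1)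
    (hZp : ∀ i, μ {ω | Z i ω = 1} = ENNReal.ofReal P)
    (Atil : Fin Nn → Fin Nn → Ωn → ℕ) (hmeas : ∀ i j, Measurable (Atil i j))
    (hsymm : ∀ i j ω, Atil i j ω = Atil j i ω) (hdiag : ∀ i ω, Atil i i ω = 0)
    (h01 : ∀ i j ω, Atil i j ω = 0 ∨ Atil i j ω = 1)
    (htrue : ∀ i j : Fin Nn, i < j → A i j = 1 →
      μ {ω | Atil i j ω = 1} = ENNReal.ofReal (1 - β))
    (hindep : iIndepFun
      (Sum.elim Z (fun e : {e : Fin Nn × Fin Nn // e.1 < e.2} => Atil e.1.1 e.1.2)) μ)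
    (v : Fin Nn) (y : Fin 4 → ℝ) :
    (∫ ω, ((if 0 < P * (1 - P) ^ (∑ j, Atil v j ω) then (1:ℝ) else 0)
        * (if Z v ω = 1 ∧ (∑ j, Z j ω * Atil v j ω) = 0 then (1:ℝ) else 0)
        * (P * (1 - P) ^ (∑ j, Atil v j ω))⁻¹
        * (if Z v ω = 1 then (if 0 < ∑ j, Z j ω * A v j then y 0 else y 1)
           else (if 0 < ∑ j, Z j ω * A v j then y 2 else y 3))) ∂μ)
      = y 0 + (y 1 - y 0) * (1 - β * P) ^ (∑ j, A v j)
    ∧ (∫ ω, ((if 0 < (1 - P) ^ ((∑ j, Atil v j ω) + 1) then (1:ℝ) else 0)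
        * (if Z v ω = 0 ∧ (∑ j, Z j ω * Atil v j ω) = 0 then (1:ℝ) else 0)
        * ((1 - P) ^ ((∑ j, Atil v j ω) + 1))⁻¹
        * (if Z v ω = 1 then (if 0 < ∑ j, Z j ω * A v j then y 0 else y 1)
           else (if 0 < ∑ j, Z j ω * A v j then y 2 else y 3))) ∂μ)
      = y 2 + (y 3 - y 2) * (1 - β * P) ^ (∑ j, A v j) := by
  classical
  have h1P : (0:ℝ) < 1 - P := by linarith
  set ι := (Fin Nn ⊕ {e : Fin Nn × Fin Nn // e.1 < e.2}) with hι
  set X : ι → Ωn → ℕ :=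
    Sum.elim Z (fun e : {e : Fin Nn × Fin Nn // e.1 < e.2} => Atil e.1.1 e.1.2) with hX
  have hXm : ∀ i, Measurable (X i) := by rintro (i | e); exacts [hZmeas i, hmeas _ _]
  have hX01 : ∀ i ω, X i ω = 0 ∨ X i ω = 1 := by rintro (i | e) ω; exacts [hZ01 i ω, h01 _ _ ω]
  set c2 : Fin Nn → ι := fun j =>
    if h : v < j then Sum.inr ⟨(v, j), h⟩
    else if h' : j < v then Sum.inr ⟨(j, v), h'⟩ else Sum.inl j with hc2def
  have hAT : ∀ j, j ≠ v → ∀ ω, Atil v j ω = X (c2 j) ω := by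
    intro j hj ω
    rcases hj.lt_or_gt with h' | h'
    · simp only [hc2def, dif_neg (asymm h'), dif_pos h']
      exact hsymm v j ω
    · simp only [hc2def, dif_pos h']
      rfl
  have hi0c2 : ∀ j, j ≠ v → (Sum.inl v : ι) ≠ c2 j := by
    intro j hj
    rcases hj.lt_or_gt with h' | h' <;>
      simp only [hc2def, dif_neg (asymm h'), dif_pos h'] <;> simp
  have hc1c2 : ∀ j j', j ≠ v → j' ≠ v → (Sum.inl j : ι) ≠ c2 j' := by
    intro j j' hj hj'
    rcases hj'.lt_or_gt with h' | h' <;>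
      simp only [hc2def, dif_neg (asymm h'), dif_pos h'] <;> simp
  have hc2inj : ∀ j j', j ≠ v → j' ≠ v → c2 j = c2 j' → j = j' := by
    have hextract : ∀ j, j ≠ v →
        Sum.elim (fun i => i) (fun e : {e : Fin Nn × Fin Nn // e.1 < e.2} =>
          if e.1.1 = v then e.1.2 else e.1.1) (c2 j) = j := by
      intro j hj
      rcases hj.lt_or_gt with h1 | h1
      · simp only [hc2def, dif_neg (asymm h1), dif_pos h1, Sum.elim_inr]
        simp [hj]
      · simp only [hc2def, dif_pos h1, Sum.elim_inr]
        simp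
    intro j j' hj hj' heq
    rw [← hextract j hj, ← hextract j' hj', heq]
  have hc1inj : ∀ j j' : Fin Nn, j ≠ v → j' ≠ v → (Sum.inl j : ι) = Sum.inl j' → j = j' :=
    fun j j' _ _ h => Sum.inl.inj h
  have hi0c1 : ∀ j, j ≠ v → (Sum.inl v : ι) ≠ Sum.inl j :=
    fun j hj h => hj (Sum.inl.inj h).symm
  have hATprob : ∀ j, j ≠ v → A v j = 1 →
      μ {ω | Atil v j ω = 1} = ENNReal.ofReal (1 - β) := by
    intro j hj hA1
    rcases hj.lt_or_gt with h' | h'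
    · have hA' : A j v = 1 := (hAsymm j v).trans hA1
      have hset : {ω | Atil v j ω = 1} = {ω | Atil j v ω = 1} := by
        ext ω; simp [hsymm v j ω]
      rw [hset]
      exact htrue j v h' hA'
    · exact htrue v j h' hA1
  have hZZ : ∀ j ω, Z j ω = X (Sum.inl j) ω := fun j ω => rfl
  have hZv : ∀ ω, Z v ω = X (Sum.inl v) ω := fun ω => rfl
  constructor
  · -- E10
    have hnorm : ∫ ω, (if Z v ω = 1 then P⁻¹ else 0) ∂μ = 1 := by
      rw [AS_ind_int (hZmeas v) 1 P⁻¹, hZp v, ENNReal.toReal_ofReal hp0.le]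
      exact inv_mul_cancel₀ (ne_of_gt hp0)
    have hkey := AS_key v (A v) (hAdiag v) (hA01 v) hp0 hp1 hβ01.2 hXm hX01 hindep
      (Sum.inl v) Sum.inl c2 Z (fun j => Atil v j) hZZ hZv hAT (hdiag v)
      hi0c1 hi0c2 hc1c2 hc1inj hc2inj hZp hATprob 1 P⁻¹ hnorm (y 0) (y 1)
    rw [← hkey]
    apply integral_congr_ae
    filter_upwards with ω
    have hpos : (0:ℝ) < P * (1 - P) ^ (∑ j, Atil v j ω) := mul_pos hp0 (pow_pos h1P _)
    rw [if_pos hpos, one_mul, mul_inv]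
    by_cases hc : (Z v ω = 1 ∧ (∑ j, Z j ω * Atil v j ω) = 0)
    · rw [if_pos hc, if_pos hc.1]
    · rw [if_neg hc]; ring
  · -- E00
    have hcompl : {ω | Z v ω = 0} = {ω | Z v ω = 1}ᶜ := by
      ext ω; rcases hZ01 v ω with h | h <;> simp [h]
    have hms : MeasurableSet {ω | Z v ω = 1} := hZmeas v (measurableSet_singleton 1)
    have hnorm : ∫ ω, (if Z v ω = 0 then (1 - P)⁻¹ else 0) ∂μ = 1 := by
      rw [AS_ind_int (hZmeas v) 0 (1 - P)⁻¹, hcompl,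
        measure_compl hms (measure_ne_top μ _),
        measure_univ, hZp v,
        ENNReal.toReal_sub_of_le (ENNReal.ofReal_le_one.mpr hp1.le) ENNReal.one_ne_top,
        ENNReal.toReal_one, ENNReal.toReal_ofReal hp0.le]
      exact inv_mul_cancel₀ (ne_of_gt h1P)
    have hkey := AS_key v (A v) (hAdiag v) (hA01 v) hp0 hp1 hβ01.2 hXm hX01 hindep
      (Sum.inl v) Sum.inl c2 Z (fun j => Atil v j) hZZ hZv hAT (hdiag v)
      hi0c1 hi0c2 hc1c2 hc1inj hc2inj hZp hATprob 0 (1 - P)⁻¹ hnorm (y 2) (y 3)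
    rw [← hkey]
    apply integral_congr_ae
    filter_upwards with ω
    have hpos : (0:ℝ) < (1 - P) ^ ((∑ j, Atil v j ω) + 1) := pow_pos h1P _
    rw [if_pos hpos, one_mul]
    by_cases hc : (Z v ω = 0 ∧ (∑ j, Z j ω * Atil v j ω) = 0)
    · rw [if_pos hc, if_neg (by rw [hc.1]; norm_num : ¬ Z v ω = 1), pow_succ, mul_inv]
      ring
    · rw [if_neg hc]; ring

/-- Per-vertex limits of the Aronow–Samii estimators at levels c_10 and
c_00 in noisy networks, together with the exact identities
`E[ỹ_{A&S,i}(c_10)] = y(c_10) + (1−(1−β_n p_n)^{d_n})(y(c_11)−y(c_10))` and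
`E[ỹ_{A&S,i}(c_00)] = y(c_00) + (1−(1−β_n p_n)^{d_n})(y(c_01)−y(c_00))`.
Outcomes are indexed by 0 ↦ c_11, 1 ↦ c_10, 2 ↦ c_01, 3 ↦ c_00. -/
theorem aronow_samii_pervertex_c10_c00
    (Ω : ℕ → Type) [∀ n, MeasurableSpace (Ω n)]
    (μ : ∀ n, Measure (Ω n)) [∀ n, IsProbabilityMeasure (μ n)]
    (N : ℕ → ℕ)
    (A : ∀ n, Fin (N n) → Fin (N n) → ℕ)
    (hAsymm : ∀ n i j, A n i j = A n j i)
    (hAdiag : ∀ n i, A n i i = 0)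
    (hA01 : ∀ n i j, A n i j = 0 ∨ A n i j = 1)
    (α β p : ℕ → ℝ)
    (hα01 : ∀ n, 0 ≤ α n ∧ α n ≤ 1) (hβ01 : ∀ n, 0 ≤ β n ∧ β n ≤ 1)
    (hp01 : ∀ n, 0 < p n ∧ p n < 1) (hp0 : Tendsto p atTop (nhds 0))
    (Z : ∀ n, Fin (N n) → Ω n → ℕ)
    (hZmeas : ∀ n i, Measurable (Z n i))
    (hZ01 : ∀ n i ω, Z n i ω = 0 ∨ Z n i ω = 1)
    (hZp : ∀ n i, μ n {ω | Z n i ω = 1} = ENNReal.ofReal (p n))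
    (Atil : ∀ n, Fin (N n) → Fin (N n) → Ω n → ℕ)
    (hmeas : ∀ n i j, Measurable (Atil n i j))
    (hsymm : ∀ n i j ω, Atil n i j ω = Atil n j i ω)
    (hdiag : ∀ n i ω, Atil n i i ω = 0)
    (h01 : ∀ n i j ω, Atil n i j ω = 0 ∨ Atil n i j ω = 1)
    (hfalse : ∀ n, ∀ i j : Fin (N n), i < j → A n i j = 0 →
      μ n {ω | Atil n i j ω = 1} = ENNReal.ofReal (α n))
    (htrue : ∀ n, ∀ i j : Fin (N n), i < j → A n i j = 1 →
      μ n {ω | Atil n i j ω = 1} = ENNReal.ofReal (1 - β n))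
    (hindep : ∀ n, iIndepFun
      (Sum.elim (Z n)
        (fun e : {e : Fin (N n) × Fin (N n) // e.1 < e.2} => Atil n e.1.1 e.1.2)) (μ n))
    -- the distinguished vertex and its degree
    (v : ∀ n, Fin (N n)) (d : ℕ → ℕ) (hd : ∀ n, d n = ∑ j, A n (v n) j)
    -- fixed bounded potential outcomes
    (y : Fin 4 → ℝ) (c : ℝ) (hy : ∀ k, |y k| ≤ c)
    -- per-vertex Aronow–Samii estimators at levels c_10 and c_00
    (E10 E00 : ℕ → ℝ)
    (hE10 : ∀ n, E10 n = ∫ ω,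
      ((if 0 < p n * (1 - p n) ^ (∑ j, Atil n (v n) j ω) then (1:ℝ) else 0)
        * (if Z n (v n) ω = 1 ∧ (∑ j, Z n j ω * Atil n (v n) j ω) = 0 then (1:ℝ) else 0)
        * (p n * (1 - p n) ^ (∑ j, Atil n (v n) j ω))⁻¹
        * (if Z n (v n) ω = 1 then
            (if 0 < ∑ j, Z n j ω * A n (v n) j then y 0 else y 1)
           else
            (if 0 < ∑ j, Z n j ω * A n (v n) j then y 2 else y 3))) ∂μ n)
    (hE00 : ∀ n, E00 n = ∫ ω,
      ((if 0 < (1 - p n) ^ ((∑ j, Atil n (v n) j ω) + 1) then (1:ℝ) else 0)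
        * (if Z n (v n) ω = 0 ∧ (∑ j, Z n j ω * Atil n (v n) j ω) = 0 then (1:ℝ) else 0)
        * ((1 - p n) ^ ((∑ j, Atil n (v n) j ω) + 1))⁻¹
        * (if Z n (v n) ω = 1 then
            (if 0 < ∑ j, Z n j ω * A n (v n) j then y 0 else y 1)
           else
            (if 0 < ∑ j, Z n j ω * A n (v n) j then y 2 else y 3))) ∂μ n) :
    -- (i) if d_n p_n → ∞ and liminf β_n > 0
    (Tendsto (fun n => (d n : ℝ) * p n) atTop atTop →
      0 < Filter.liminf β atTop →
      Tendsto E10 atTop (nhds (y 0)) ∧ Tendsto E00 atTop (nhds (y 2))) ∧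
    -- (ii) if d_n p_n → 0
    (Tendsto (fun n => (d n : ℝ) * p n) atTop (nhds 0) →
      Tendsto E10 atTop (nhds (y 1)) ∧ Tendsto E00 atTop (nhds (y 3))) ∧
    -- exact identities
    (∀ n, E10 n = y 1 + (1 - (1 - β n * p n) ^ (d n)) * (y 0 - y 1)) ∧
    (∀ n, E00 n = y 3 + (1 - (1 - β n * p n) ^ (d n)) * (y 2 - y 3)) := by
  classical
  have hper : ∀ n, E10 n = y 0 + (y 1 - y 0) * (1 - β n * p n) ^ (d n)
      ∧ E00 n = y 2 + (y 3 - y 2) * (1 - β n * p n) ^ (d n) := by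
    intro n
    have h := AS_per_n (A n) (hAsymm n) (hAdiag n) (hA01 n)
      ⟨(hβ01 n).1, (hβ01 n).2⟩ (hp01 n).1 (hp01 n).2
      (Z n) (hZmeas n) (hZ01 n) (hZp n)
      (Atil n) (hmeas n) (hsymm n) (hdiag n) (h01 n) (htrue n) (hindep n) (v n) y
    refine ⟨?_, ?_⟩
    · rw [hE10 n, h.1, ← hd n]
    · rw [hE00 n, h.2, ← hd n]
  have hfun10 : E10 = fun n => y 0 + (y 1 - y 0) * (1 - β n * p n) ^ (d n) :=
    funext fun n => (hper n).1
  have hfun00 : E00 = fun n => y 2 + (y 3 - y 2) * (1 - β n * p n) ^ (d n) :=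
    funext fun n => (hper n).2
  refine ⟨?_, ?_, ?_, ?_⟩
  · intro hdp hlim
    have ht := AS_t_lim_zero β p d hβ01 hp01 hdp hlim
    constructor
    · rw [hfun10]
      have := (ht.const_mul (y 1 - y 0)).const_add (y 0)
      simpa using this
    · rw [hfun00]
      have := (ht.const_mul (y 3 - y 2)).const_add (y 2)
      simpa using this
  · intro hdp
    have ht := AS_t_lim_one β p d hβ01 hp01 hdp
    constructor
    · rw [hfun10]
      have := (ht.const_mul (y 1 - y 0)).const_add (y 0)
      have he : y 0 + (y 1 - y 0) * 1 = y 1 := by ring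
      rw [he] at this
      exact this
    · rw [hfun00]
      have := (ht.const_mul (y 3 - y 2)).const_add (y 2)
      have he : y 2 + (y 3 - y 2) * 1 = y 3 := by ring
      rw [he] at this
      exact this
  · intro n
    rw [(hper n).1]; ring
  · intro n
    rw [(hper n).2]; ring
end
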